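/- arXiv:2303.12200 — 8 statements merged into one kernel-verified Lean document; each statement's English description precedes it below -/
import Mathlib

section
/- Let n ≥ 2 and define f : ℝⁿ → ℝ by f(x) = exp(π·x₁/2)·sin(π·xₙ/2). Then f is harmonic on all of ℝⁿ, f(x) ≥ 0 for every x with 0 ≤ xₙ ≤ 2, f(x) = 0 for every x with xₙ = 0 or xₙ = 2, f is not identically zero on the slab {x : 0 ≤ xₙ ≤ 2}, and sup{‖∇f(x)‖ : x ∈ ℝⁿ, xₙ = 0} = ∞. -/
open MeasureTheory Set Real


lemma key_fderiv {n : ℕ} (g h g' h' : ℝ → ℝ)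
    (hg : ∀ t, HasDerivAt g (g' t) t) (hh : ∀ t, HasDerivAt h (h' t) t)
    (i k : Fin n) (x : EuclideanSpace ℝ (Fin n)) :
    HasFDerivAt (fun y : EuclideanSpace ℝ (Fin n) => g (y i) * h (y k))
      ((g' (x i) * h (x k)) • (EuclideanSpace.proj i : EuclideanSpace ℝ (Fin n) →L[ℝ] ℝ)
        + (g (x i) * h' (x k)) • (EuclideanSpace.proj k : EuclideanSpace ℝ (Fin n) →L[ℝ] ℝ)) x := by
  have hpi : HasFDerivAt (fun y : EuclideanSpace ℝ (Fin n) => y i)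
      (EuclideanSpace.proj i : EuclideanSpace ℝ (Fin n) →L[ℝ] ℝ) x :=
    (EuclideanSpace.proj i : EuclideanSpace ℝ (Fin n) →L[ℝ] ℝ).hasFDerivAt
  have hpk : HasFDerivAt (fun y : EuclideanSpace ℝ (Fin n) => y k)
      (EuclideanSpace.proj k : EuclideanSpace ℝ (Fin n) →L[ℝ] ℝ) x :=
    (EuclideanSpace.proj k : EuclideanSpace ℝ (Fin n) →L[ℝ] ℝ).hasFDerivAt
  have hi : HasFDerivAt (fun y : EuclideanSpace ℝ (Fin n) => g (y i))
      (g' (x i) • (EuclideanSpace.proj i : EuclideanSpace ℝ (Fin n) →L[ℝ] ℝ)) x :=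
    (hg (x i)).comp_hasFDerivAt x hpi
  have hk : HasFDerivAt (fun y : EuclideanSpace ℝ (Fin n) => h (y k))
      (h' (x k) • (EuclideanSpace.proj k : EuclideanSpace ℝ (Fin n) →L[ℝ] ℝ)) x :=
    (hh (x k)).comp_hasFDerivAt x hpk
  have h2 := hi.mul hk
  rw [smul_smul, smul_smul, mul_comm (h (x k)), add_comm] at h2
  exact h2

/-- The Laplacian `Δf = Σᵢ ∂²f/∂xᵢ²` of a function on Euclidean space. -/
noncomputable def laplacian {n : ℕ} (f : EuclideanSpace ℝ (Fin n) → ℝ)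
    (x : EuclideanSpace ℝ (Fin n)) : ℝ :=
  ∑ i : Fin n,
    fderiv ℝ (fun y => fderiv ℝ f y (EuclideanSpace.single i 1)) x (EuclideanSpace.single i 1)

/-- The function `f(x) = exp(π x₁ / 2) · sin(π xₙ / 2)` is harmonic on `ℝⁿ`, non-negative on the
slab `{0 ≤ xₙ ≤ 2}`, vanishes on the boundary hyperplanes `{xₙ = 0}` and `{xₙ = 2}`, is not
identically zero on the slab, and its gradient is unbounded on `{xₙ = 0}`: the boundary gradient
bound in the Liouville theorem on the slab cannot be dropped. -/
theorem slab_counterexample (n : ℕ) (hn : 2 ≤ n) :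
    let f : EuclideanSpace ℝ (Fin n) → ℝ :=
      fun x => Real.exp (π * x ⟨0, by omega⟩ / 2) * Real.sin (π * x ⟨n - 1, by omega⟩ / 2)
    (∀ x : EuclideanSpace ℝ (Fin n), laplacian f x = 0) ∧
    (∀ x : EuclideanSpace ℝ (Fin n),
      0 ≤ x ⟨n - 1, by omega⟩ → x ⟨n - 1, by omega⟩ ≤ 2 → 0 ≤ f x) ∧
    (∀ x : EuclideanSpace ℝ (Fin n),
      x ⟨n - 1, by omega⟩ = 0 ∨ x ⟨n - 1, by omega⟩ = 2 → f x = 0) ∧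
    (∃ x : EuclideanSpace ℝ (Fin n),
      0 ≤ x ⟨n - 1, by omega⟩ ∧ x ⟨n - 1, by omega⟩ ≤ 2 ∧ f x ≠ 0) ∧
    ¬ (∃ Cb : ℝ, ∀ x : EuclideanSpace ℝ (Fin n),
      x ⟨n - 1, by omega⟩ = 0 → ‖gradient f x‖ ≤ Cb) := by
  intro f
  set a : ℝ := π / 2 with ha
  set i0 : Fin n := ⟨0, by omega⟩ with hi0def
  set k : Fin n := ⟨n - 1, by omega⟩ with hkdef
  have hik : i0 ≠ k := by
    rw [hi0def, hkdef]
    simp only [ne_eq, Fin.mk.injEq]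
    omega
  have hlin : ∀ t : ℝ, HasDerivAt (fun s : ℝ => a * s) a t := by
    intro t; simpa using (hasDerivAt_id t).const_mul a
  have hG : ∀ t : ℝ, HasDerivAt (fun s : ℝ => Real.exp (a * s)) (a * Real.exp (a * t)) t := by
    intro t
    have h := (Real.hasDerivAt_exp (a * t)).comp t (hlin t)
    rw [show Real.exp (a * t) * a = a * Real.exp (a * t) from mul_comm _ _] at h
    exact h
  have hG2 : ∀ t : ℝ, HasDerivAt (fun s : ℝ => a * Real.exp (a * s))
      (a * a * Real.exp (a * t)) t := by
    intro t
    simpa [mul_assoc] using (hG t).const_mul a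
  have hH : ∀ t : ℝ, HasDerivAt (fun s : ℝ => Real.sin (a * s)) (a * Real.cos (a * t)) t := by
    intro t
    have h := (Real.hasDerivAt_sin (a * t)).comp t (hlin t)
    rw [show Real.cos (a * t) * a = a * Real.cos (a * t) from mul_comm _ _] at h
    exact h
  have hH2 : ∀ t : ℝ, HasDerivAt (fun s : ℝ => a * Real.cos (a * s))
      (-(a * a) * Real.sin (a * t)) t := by
    intro t
    have h2 : HasDerivAt (fun s : ℝ => a * Real.cos (a * s)) (a * (-Real.sin (a * t) * a)) t :=
      ((Real.hasDerivAt_cos (a * t)).comp t (hlin t)).const_mul a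
    convert h2 using 1
    ring
  have hfeq : f = fun y : EuclideanSpace ℝ (Fin n) =>
      Real.exp (a * y i0) * Real.sin (a * y k) := by
    funext y
    show Real.exp (π * y i0 / 2) * Real.sin (π * y k / 2) = _
    rw [show π * y i0 / 2 = a * y i0 by rw [ha]; ring,
        show π * y k / 2 = a * y k by rw [ha]; ring]
  have hDf : ∀ y : EuclideanSpace ℝ (Fin n), HasFDerivAt f
      ((a * Real.exp (a * y i0) * Real.sin (a * y k)) •
          (EuclideanSpace.proj i0 : EuclideanSpace ℝ (Fin n) →L[ℝ] ℝ)
        + (Real.exp (a * y i0) * (a * Real.cos (a * y k))) •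
          (EuclideanSpace.proj k : EuclideanSpace ℝ (Fin n) →L[ℝ] ℝ)) y := by
    intro y
    rw [hfeq]
    exact key_fderiv (fun t => Real.exp (a * t)) (fun t => Real.sin (a * t))
      (fun t => a * Real.exp (a * t)) (fun t => a * Real.cos (a * t)) hG hH i0 k y
  have happly : ∀ (y : EuclideanSpace ℝ (Fin n)) (i : Fin n),
      fderiv ℝ f y (EuclideanSpace.single i 1) =
      (if i0 = i then a * Real.exp (a * y i0) * Real.sin (a * y k) else 0)
        + (if k = i then Real.exp (a * y i0) * (a * Real.cos (a * y k)) else 0) := by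
    intro y i
    rw [(hDf y).fderiv]
    simp only [ContinuousLinearMap.add_apply, ContinuousLinearMap.coe_smul', Pi.smul_apply,
      PiLp.proj_apply, EuclideanSpace.single_apply, smul_eq_mul]
    by_cases h1 : i0 = i <;> by_cases h2 : k = i <;> simp [h1, h2]
  have hterm : ∀ (x : EuclideanSpace ℝ (Fin n)) (i : Fin n),
      fderiv ℝ (fun y => fderiv ℝ f y (EuclideanSpace.single i 1)) x
        (EuclideanSpace.single i 1) =
      (if i0 = i then a * a * Real.exp (a * x i0) * Real.sin (a * x k) else 0)
        + (if k = i then -(a * a * Real.exp (a * x i0) * Real.sin (a * x k)) else 0) := by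
    intro x i
    by_cases h1 : i0 = i
    · subst h1
      have h2 : ¬ (k = i0) := fun h => hik h.symm
      have hfun : (fun y : EuclideanSpace ℝ (Fin n) =>
          fderiv ℝ f y (EuclideanSpace.single i0 1))
          = fun y => (a * Real.exp (a * y i0)) * Real.sin (a * y k) := by
        funext y; rw [happly y i0, if_pos rfl, if_neg h2, add_zero]
      rw [hfun, if_pos rfl, if_neg h2, add_zero]
      have h3 : HasFDerivAt (fun y : EuclideanSpace ℝ (Fin n) =>
          (a * Real.exp (a * y i0)) * Real.sin (a * y k))
          ((a * a * Real.exp (a * x i0) * Real.sin (a * x k)) •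
              (EuclideanSpace.proj i0 : EuclideanSpace ℝ (Fin n) →L[ℝ] ℝ)
            + ((a * Real.exp (a * x i0)) * (a * Real.cos (a * x k))) •
              (EuclideanSpace.proj k : EuclideanSpace ℝ (Fin n) →L[ℝ] ℝ)) x :=
        key_fderiv (fun t => a * Real.exp (a * t)) (fun t => Real.sin (a * t))
          (fun t => a * a * Real.exp (a * t)) (fun t => a * Real.cos (a * t)) hG2 hH i0 k x
      rw [h3.fderiv]
      simp only [ContinuousLinearMap.add_apply, ContinuousLinearMap.coe_smul', Pi.smul_apply,
        PiLp.proj_apply, EuclideanSpace.single_apply, smul_eq_mul]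
      simp only [if_true]
      rw [if_neg h2]
      ring
    · by_cases h2 : k = i
      · subst h2
        have hfun : (fun y : EuclideanSpace ℝ (Fin n) =>
            fderiv ℝ f y (EuclideanSpace.single k 1))
            = fun y => Real.exp (a * y i0) * (a * Real.cos (a * y k)) := by
          funext y; rw [happly y k, if_neg hik, if_pos rfl, zero_add]
        rw [hfun, if_neg hik, if_pos rfl, zero_add]
        have h3 : HasFDerivAt (fun y : EuclideanSpace ℝ (Fin n) =>
            Real.exp (a * y i0) * (a * Real.cos (a * y k)))
            ((a * Real.exp (a * x i0) * (a * Real.cos (a * x k))) •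
                (EuclideanSpace.proj i0 : EuclideanSpace ℝ (Fin n) →L[ℝ] ℝ)
              + (Real.exp (a * x i0) * (-(a * a) * Real.sin (a * x k))) •
                (EuclideanSpace.proj k : EuclideanSpace ℝ (Fin n) →L[ℝ] ℝ)) x :=
          key_fderiv (fun t => Real.exp (a * t)) (fun t => a * Real.cos (a * t))
            (fun t => a * Real.exp (a * t)) (fun t => -(a * a) * Real.sin (a * t)) hG hH2 i0 k x
        rw [h3.fderiv]
        simp only [ContinuousLinearMap.add_apply, ContinuousLinearMap.coe_smul', Pi.smul_apply,
          PiLp.proj_apply, EuclideanSpace.single_apply, smul_eq_mul]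
        simp only [if_true]
        rw [if_neg hik]
        ring
      · have hfun : (fun y : EuclideanSpace ℝ (Fin n) =>
            fderiv ℝ f y (EuclideanSpace.single i 1)) = fun _ => (0 : ℝ) := by
          funext y; rw [happly y i, if_neg h1, if_neg h2, add_zero]
        rw [hfun, if_neg h1, if_neg h2, add_zero]
        simp
  refine ⟨?_, ?_, ?_, ?_, ?_⟩
  · intro x
    simp only [laplacian]
    rw [Finset.sum_congr rfl (fun i _ => hterm x i), Finset.sum_add_distrib,
      Finset.sum_ite_eq, Finset.sum_ite_eq]
    simp
  · intro x hx0 hx2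
    show 0 ≤ Real.exp (π * x i0 / 2) * Real.sin (π * x k / 2)
    apply mul_nonneg (Real.exp_nonneg _)
    apply Real.sin_nonneg_of_nonneg_of_le_pi
    · nlinarith [Real.pi_pos]
    · nlinarith [Real.pi_pos]
  · intro x hx
    show Real.exp (π * x i0 / 2) * Real.sin (π * x k / 2) = 0
    rcases hx with h | h
    · rw [show x k = 0 from h]
      simp
    · rw [show x k = 2 from h, show π * 2 / 2 = π by ring]
      simp [Real.sin_pi]
  · refine ⟨EuclideanSpace.single k 1, ?_, ?_, ?_⟩
    · show (0 : ℝ) ≤ EuclideanSpace.single k (1 : ℝ) k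
      rw [EuclideanSpace.single_apply, if_pos rfl]; norm_num
    · show EuclideanSpace.single k (1 : ℝ) k ≤ 2
      rw [EuclideanSpace.single_apply, if_pos rfl]; norm_num
    · show Real.exp (π * EuclideanSpace.single k (1 : ℝ) i0 / 2) *
        Real.sin (π * EuclideanSpace.single k (1 : ℝ) k / 2) ≠ 0
      rw [EuclideanSpace.single_apply, EuclideanSpace.single_apply, if_pos rfl, if_neg hik]
      rw [show π * 0 / 2 = 0 by ring, show π * 1 / 2 = π / 2 by ring]
      rw [Real.exp_zero, Real.sin_pi_div_two]
      norm_num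
  · rintro ⟨Cb, hCb⟩
    set t : ℝ := |Cb| + 1 with htdef
    set x : EuclideanSpace ℝ (Fin n) := EuclideanSpace.single i0 t with hxdef
    have hxk : x k = 0 := by
      rw [hxdef, EuclideanSpace.single_apply, if_neg (fun h => hik h.symm)]
    have hxi0 : x i0 = t := by
      rw [hxdef, EuclideanSpace.single_apply, if_pos rfl]
    have hb : ‖gradient f x‖ ≤ Cb := hCb x hxk
    have hnorm : ‖gradient f x‖ = ‖fderiv ℝ f x‖ := by
      simp only [gradient]
      exact LinearIsometryEquiv.norm_map _ _
    have hle : |fderiv ℝ f x (EuclideanSpace.single k 1)| ≤ ‖fderiv ℝ f x‖ := by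
      calc |fderiv ℝ f x (EuclideanSpace.single k 1)|
          = ‖fderiv ℝ f x (EuclideanSpace.single k 1)‖ := rfl
        _ ≤ ‖fderiv ℝ f x‖ * ‖EuclideanSpace.single k (1 : ℝ)‖ :=
            ContinuousLinearMap.le_opNorm _ _
        _ = ‖fderiv ℝ f x‖ := by rw [EuclideanSpace.norm_single]; simp
    have hval : fderiv ℝ f x (EuclideanSpace.single k 1) = a * Real.exp (a * t) := by
      rw [happly x k, if_neg hik, if_pos rfl, zero_add, hxi0, hxk, mul_zero,
        Real.cos_zero, mul_one]
      ring
    have hfinal : a * Real.exp (a * t) ≤ Cb := by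
      calc a * Real.exp (a * t) ≤ |fderiv ℝ f x (EuclideanSpace.single k 1)| := by
            rw [hval]; exact le_abs_self _
        _ ≤ ‖fderiv ℝ f x‖ := hle
        _ = ‖gradient f x‖ := hnorm.symm
        _ ≤ Cb := hb
    have hexp : a * t + 1 ≤ Real.exp (a * t) := Real.add_one_le_exp _
    have hpi : (3 : ℝ) < π := Real.pi_gt_three
    have ht1 : (1 : ℝ) ≤ t := by
      rw [htdef]; have := abs_nonneg Cb; linarith
    have hC : Cb ≤ |Cb| := le_abs_self Cb
    have ha0 : (3 / 2 : ℝ) < a := by rw [ha]; linarith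
    have step : a * (a * t + 1) ≤ a * Real.exp (a * t) :=
      mul_le_mul_of_nonneg_left hexp (by linarith)
    nlinarith [abs_nonneg Cb, sq_nonneg (a - 3 / 2), htdef]
end

section
/- Let n ≥ 4 be an integer, let r > 4(n−1), and let f : (0, r] → ℝ be continuously differentiable with f′(t) ≤ 0 and t² + f(t)² ≥ 1 for all t ∈ (0, r). Assume the function ψ(t) = t^{n−2}·f′(t)/√(1 + f′(t)²) is differentiable on (0, r) with ψ′(t) ≥ −2(n−1)·t^{n−2}·(t² + f(t)²)^{−(n−1)/2} for all t ∈ (0, r), and that ψ(t) → 0 as t → 0⁺. Then f′(t) ≥ −4(n−1)·t^{2−n}·(log t + 1) for every t ∈ [4(n−1), r). -/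
open MeasureTheory Set Real Filter

set_option maxHeartbeats 1000000 in
/-- **Gradient estimate** from the proof of Lemma 5.6 ('height bound'). If `f : (0, r] → ℝ` is a
continuously differentiable radial profile with `f' ≤ 0`, `t² + f(t)² ≥ 1`, and the flux
`ψ(t) = t^(n-2) f'(t)/√(1+f'(t)²)` satisfies `ψ'(t) ≥ -2(n-1) t^(n-2) (t²+f(t)²)^(-(n-1)/2)` and
`ψ(t) → 0` as `t → 0⁺`, then `f'(t) ≥ -4(n-1) t^(2-n) (log t + 1)` for `t ∈ [4(n-1), r)`. -/
theorem gradient_estimate_height_bound (n : ℕ) (hn : 4 ≤ n) (r : ℝ)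
    (hr : 4 * ((n : ℝ) - 1) < r) (f f' ψ' : ℝ → ℝ)
    (hderiv : ∀ t ∈ Set.Ioo (0 : ℝ) r, HasDerivAt f (f' t) t)
    (hfcont : ContinuousOn f (Set.Ioc 0 r))
    (hf'cont : ContinuousOn f' (Set.Ioc 0 r))
    (hf'nonpos : ∀ t ∈ Set.Ioo (0 : ℝ) r, f' t ≤ 0)
    (hgeom : ∀ t ∈ Set.Ioo (0 : ℝ) r, 1 ≤ t ^ 2 + f t ^ 2)
    (hψderiv : ∀ t ∈ Set.Ioo (0 : ℝ) r,
      HasDerivAt (fun u => u ^ ((n : ℝ) - 2) * f' u / Real.sqrt (1 + f' u ^ 2)) (ψ' t) t)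
    (hψ'ge : ∀ t ∈ Set.Ioo (0 : ℝ) r,
      -(2 * ((n : ℝ) - 1)) * t ^ ((n : ℝ) - 2) * (t ^ 2 + f t ^ 2) ^ (-(((n : ℝ) - 1) / 2))
        ≤ ψ' t)
    (hψ0 : Filter.Tendsto (fun u => u ^ ((n : ℝ) - 2) * f' u / Real.sqrt (1 + f' u ^ 2))
      (nhdsWithin 0 (Set.Ioi 0)) (nhds 0)) :
    ∀ t ∈ Set.Ico (4 * ((n : ℝ) - 1)) r,
      -(4 * ((n : ℝ) - 1)) * t ^ (2 - (n : ℝ)) * (Real.log t + 1) ≤ f' t := by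
  intro t ht
  obtain ⟨ht1, ht2⟩ := ht
  have hn' : (4 : ℝ) ≤ (n : ℝ) := by exact_mod_cast hn
  have h12 : (12 : ℝ) ≤ 4 * ((n : ℝ) - 1) := by linarith
  have ht12 : (12 : ℝ) ≤ t := le_trans h12 ht1
  have ht0 : (0 : ℝ) < t := by linarith
  have ht1' : (1 : ℝ) ≤ t := by linarith
  have h1r : (1 : ℝ) < r := by linarith
  have htIoo : t ∈ Set.Ioo (0 : ℝ) r := ⟨ht0, ht2⟩
  set Ψ : ℝ → ℝ := fun u => u ^ ((n : ℝ) - 2) * f' u / Real.sqrt (1 + f' u ^ 2) with hΨdef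
  clear_value Ψ
  -- Step 1: lower bounds on ψ'
  have hkey : ∀ u ∈ Set.Ioo (0 : ℝ) r, -(2 * ((n : ℝ) - 1)) * u ^ ((n : ℝ) - 2) ≤ ψ' u := by
    intro u hu
    refine le_trans ?_ (hψ'ge u hu)
    have hB : (u ^ 2 + f u ^ 2) ^ (-(((n : ℝ) - 1) / 2)) ≤ 1 :=
      Real.rpow_le_one_of_one_le_of_nonpos (hgeom u hu) (by linarith)
    have hc : -(2 * ((n : ℝ) - 1)) * u ^ ((n : ℝ) - 2) ≤ 0 := by
      have := Real.rpow_nonneg hu.1.le ((n : ℝ) - 2)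
      nlinarith
    nlinarith
  have hkey2 : ∀ u ∈ Set.Ioo (0 : ℝ) r, 1 ≤ u →
      -(2 * ((n : ℝ) - 1)) * u⁻¹ ≤ ψ' u := by
    intro u hu h1u
    refine le_trans ?_ (hψ'ge u hu)
    have hu0 : (0 : ℝ) < u := hu.1
    have hsq : (0 : ℝ) < u ^ 2 := by positivity
    have hB : (u ^ 2 + f u ^ 2) ^ (-(((n : ℝ) - 1) / 2))
        ≤ (u ^ 2) ^ (-(((n : ℝ) - 1) / 2)) := by
      apply Real.rpow_le_rpow_of_nonpos hsq (by nlinarith [sq_nonneg (f u)])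
      linarith
    have hc : -(2 * ((n : ℝ) - 1)) * u ^ ((n : ℝ) - 2) ≤ 0 := by
      have := Real.rpow_nonneg hu0.le ((n : ℝ) - 2)
      nlinarith
    have hcompute : u ^ ((n : ℝ) - 2) * (u ^ 2) ^ (-(((n : ℝ) - 1) / 2)) = u⁻¹ := by
      rw [show (u ^ 2 : ℝ) = u ^ ((2 : ℕ) : ℝ) from (Real.rpow_natCast u 2).symm,
        ← Real.rpow_mul hu0.le, ← Real.rpow_add hu0,
        show ((n : ℝ) - 2 + ((2 : ℕ) : ℝ) * -(((n : ℝ) - 1) / 2)) = -1 by push_cast; ring,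
        Real.rpow_neg_one]
    calc -(2 * ((n : ℝ) - 1)) * u⁻¹
        = -(2 * ((n : ℝ) - 1)) * (u ^ ((n : ℝ) - 2) * (u ^ 2) ^ (-(((n : ℝ) - 1) / 2))) := by
          rw [hcompute]
      _ = (-(2 * ((n : ℝ) - 1)) * u ^ ((n : ℝ) - 2)) * (u ^ 2) ^ (-(((n : ℝ) - 1) / 2)) := by
          ring
      _ ≤ (-(2 * ((n : ℝ) - 1)) * u ^ ((n : ℝ) - 2))
            * (u ^ 2 + f u ^ 2) ^ (-(((n : ℝ) - 1) / 2)) := by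
          exact mul_le_mul_of_nonpos_left hB hc
  -- Step 2: Ψ 1 ≥ -2
  have hΦ₁deriv : ∀ u ∈ Set.Ioo (0 : ℝ) r,
      HasDerivAt (fun u => Ψ u + 2 * u ^ ((n : ℝ) - 1))
        (ψ' u + 2 * (((n : ℝ) - 1) * u ^ ((n : ℝ) - 1 - 1))) u := by
    intro u hu
    exact (hψderiv u hu).add
      ((Real.hasDerivAt_rpow_const (Or.inl hu.1.ne')).const_mul 2)
  have hsub1 : Set.Ioc (0 : ℝ) 1 ⊆ Set.Ioo (0 : ℝ) r := fun u hu => ⟨hu.1, lt_of_le_of_lt hu.2 h1r⟩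
  have hmono1 : MonotoneOn (fun u => Ψ u + 2 * u ^ ((n : ℝ) - 1)) (Set.Ioc (0 : ℝ) 1) := by
    apply monotoneOn_of_hasDerivWithinAt_nonneg (f' := fun u =>
      ψ' u + 2 * (((n : ℝ) - 1) * u ^ ((n : ℝ) - 1 - 1))) (convex_Ioc 0 1)
    · intro u hu
      exact (hΦ₁deriv u (hsub1 hu)).continuousAt.continuousWithinAt
    · intro u hu
      rw [interior_Ioc] at hu
      exact (hΦ₁deriv u (hsub1 (Set.Ioo_subset_Ioc_self hu))).hasDerivWithinAt
    · intro u hu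
      rw [interior_Ioc] at hu
      have h := hkey u (hsub1 (Set.Ioo_subset_Ioc_self hu))
      have he : ((n : ℝ) - 1 - 1) = ((n : ℝ) - 2) := by ring
      rw [he]
      linarith
  have htend : Filter.Tendsto (fun u => Ψ u + 2 * u ^ ((n : ℝ) - 1))
      (nhdsWithin 0 (Set.Ioi 0)) (nhds 0) := by
    have h1 : Filter.Tendsto (fun u : ℝ => u ^ ((n : ℝ) - 1)) (nhds 0)
        (nhds ((0 : ℝ) ^ ((n : ℝ) - 1))) :=
      Real.continuousAt_rpow_const 0 ((n : ℝ) - 1) (Or.inr (by linarith))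
    have h0 : ((0 : ℝ) ^ ((n : ℝ) - 1)) = 0 := Real.zero_rpow (by norm_num; linarith)
    rw [h0] at h1
    have h2 := (h1.const_mul 2).mono_left (nhdsWithin_le_nhds (s := Set.Ioi (0:ℝ)))
    have := hψ0.add h2
    simpa using this
  have hΨ1 : -2 ≤ Ψ 1 := by
    have h1mem : (1 : ℝ) ∈ Set.Ioc (0 : ℝ) 1 := ⟨one_pos, le_refl 1⟩
    have hev : ∀ᶠ u in nhdsWithin 0 (Set.Ioi 0),
        (fun u => Ψ u + 2 * u ^ ((n : ℝ) - 1)) u ≤ Ψ 1 + 2 * (1 : ℝ) ^ ((n : ℝ) - 1) := by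
      filter_upwards [Ioc_mem_nhdsGT_of_mem (Set.mem_Ico.mpr ⟨le_refl 0, one_pos⟩)] with u hu
      exact hmono1 hu h1mem hu.2
    have h0le : (0 : ℝ) ≤ Ψ 1 + 2 * (1 : ℝ) ^ ((n : ℝ) - 1) :=
      le_of_tendsto htend hev
    rw [Real.one_rpow] at h0le
    linarith
  -- Step 3: Ψ t ≥ -2 - 2(n-1) log t
  have hsub2 : Set.Icc (1 : ℝ) t ⊆ Set.Ioo (0 : ℝ) r := fun u hu =>
    ⟨lt_of_lt_of_le one_pos hu.1, lt_of_le_of_lt hu.2 ht2⟩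
  have hΦ₂deriv : ∀ u ∈ Set.Ioo (0 : ℝ) r,
      HasDerivAt (fun u => Ψ u + 2 * ((n : ℝ) - 1) * Real.log u)
        (ψ' u + 2 * ((n : ℝ) - 1) * u⁻¹) u := by
    intro u hu
    exact (hψderiv u hu).add ((Real.hasDerivAt_log hu.1.ne').const_mul (2 * ((n : ℝ) - 1)))
  have hmono2 : MonotoneOn (fun u => Ψ u + 2 * ((n : ℝ) - 1) * Real.log u) (Set.Icc 1 t) := by
    apply monotoneOn_of_hasDerivWithinAt_nonneg (f' := fun u =>
      ψ' u + 2 * ((n : ℝ) - 1) * u⁻¹) (convex_Icc 1 t)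
    · intro u hu
      exact (hΦ₂deriv u (hsub2 hu)).continuousAt.continuousWithinAt
    · intro u hu
      rw [interior_Icc] at hu
      exact (hΦ₂deriv u (hsub2 (Set.Ioo_subset_Icc_self hu))).hasDerivWithinAt
    · intro u hu
      rw [interior_Icc] at hu
      have h := hkey2 u (hsub2 (Set.Ioo_subset_Icc_self hu)) hu.1.le
      linarith
  have hΨt : -2 - 2 * ((n : ℝ) - 1) * Real.log t ≤ Ψ t := by
    have h := hmono2 (Set.mem_Icc.mpr ⟨le_refl 1, ht1'⟩) (Set.mem_Icc.mpr ⟨ht1', le_refl t⟩) ht1'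
    simp only [Real.log_one, mul_zero, add_zero] at h
    linarith
  have hlogt : (0 : ℝ) ≤ Real.log t := Real.log_nonneg ht1'
  -- Step 4: conclusion
  set L : ℝ := Real.log t + 1 with hLdef
  clear_value L
  have hL : (0 : ℝ) < L := by simp only [hLdef]; linarith
  have hΨt' : -(2 * ((n : ℝ) - 1)) * L ≤ Ψ t := by
    refine le_trans ?_ hΨt
    simp only [hLdef]
    nlinarith
  set p : ℝ := t ^ ((n : ℝ) - 2) with hpdef
  clear_value p
  have hp : (0 : ℝ) < p := by rw [hpdef]; exact Real.rpow_pos_of_pos ht0 _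
  set s : ℝ := Real.sqrt (1 + f' t ^ 2) with hsdef
  clear_value s
  have hs : (0 : ℝ) < s := by rw [hsdef]; exact Real.sqrt_pos.mpr (by positivity)
  have hs2 : s ^ 2 = 1 + f' t ^ 2 := by rw [hsdef]; exact Real.sq_sqrt (by positivity)
  have hΨteq : Ψ t = p * f' t / s := by simp only [hΨdef]; rw [hpdef, hsdef]
  have hmul : -(2 * ((n : ℝ) - 1)) * L * s ≤ p * f' t := by
    have := hΨt'
    rw [hΨteq] at this
    exact (le_div_iff₀ hs).mp this
  -- bound: 2 * (2(n-1)L) ≤ p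
  have hpt2 : t ^ (2 : ℝ) ≤ p := by
    rw [hpdef]
    apply Real.rpow_le_rpow_of_exponent_le ht1'
    linarith
  have ht2eq : t ^ (2 : ℝ) = t ^ 2 := by
    rw [show (2 : ℝ) = ((2 : ℕ) : ℝ) by norm_num, Real.rpow_natCast]
  have hLt : L ≤ t := by
    have := Real.log_le_sub_one_of_pos ht0
    simp only [hLdef]; linarith
  have h2A : 2 * (2 * ((n : ℝ) - 1) * L) ≤ p := by
    have h1 : 4 * ((n : ℝ) - 1) * L ≤ t * t := by
      apply mul_le_mul ht1 hLt hL.le ht0.le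
    rw [ht2eq] at hpt2
    nlinarith
  -- key quadratic estimate
  have hf't : f' t ≤ 0 := hf'nonpos t htIoo
  set A : ℝ := 2 * ((n : ℝ) - 1) * L with hAdef
  clear_value A
  have hA : (0 : ℝ) < A := by simp only [hAdef]; nlinarith
  set y : ℝ := -f' t with hydef
  clear_value y
  have hy : (0 : ℝ) ≤ y := by simp only [hydef]; linarith
  have h1 : p * y ≤ A * s := by rw [hydef, hAdef]; linarith [hmul]
  have hs2' : s ^ 2 = 1 + y ^ 2 := by simp only [hydef]; rw [hs2]; ring
  have hfin : p * y ≤ 2 * A := by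
    have hpy : (0 : ℝ) ≤ p * y := mul_nonneg hp.le hy
    have hsq : (p * y) ^ 2 ≤ (A * s) ^ 2 := by
      rw [sq, sq]; exact mul_self_le_mul_self hpy h1
    have e1 : (A * s) ^ 2 = A ^ 2 + A ^ 2 * y ^ 2 := by rw [mul_pow, hs2']; ring
    have h4A : 4 * A ^ 2 ≤ p ^ 2 := by nlinarith [mul_le_mul h2A h2A (by linarith) hp.le]
    have e2 : A ^ 2 * y ^ 2 ≤ p ^ 2 * y ^ 2 / 4 := by
      nlinarith [mul_le_mul_of_nonneg_right h4A (sq_nonneg y)]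
    have hub : (p * y) ^ 2 ≤ (2 * A) ^ 2 := by nlinarith [sq_nonneg A]
    calc p * y = Real.sqrt ((p * y) ^ 2) := (Real.sqrt_sq hpy).symm
      _ ≤ Real.sqrt ((2 * A) ^ 2) := Real.sqrt_le_sqrt hub
      _ = 2 * A := Real.sqrt_sq (by linarith)
  -- convert to the goal
  have hptp : t ^ (2 - (n : ℝ)) * p = 1 := by
    rw [hpdef, ← Real.rpow_add ht0]
    norm_num
  rw [← mul_le_mul_iff_left₀ hp]
  calc -(4 * ((n : ℝ) - 1)) * t ^ (2 - (n : ℝ)) * L * p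
      = -(4 * ((n : ℝ) - 1)) * L * (t ^ (2 - (n : ℝ)) * p) := by ring
    _ = -(2 * A) := by rw [hptp]; simp only [hAdef]; ring
    _ ≤ -(p * y) := by linarith
    _ = f' t * p := by simp only [hydef]; ring
end

section
/- Let n ≥ 4 be an integer, let r > 4(n−1), and let f : (0, r] → ℝ be continuously differentiable with f′(t) ≤ 0 and t² + f(t)² ≥ 1 for all t ∈ (0, r). Assume the function ψ(t) = t^{n−2}·f′(t)/√(1 + f′(t)²) is differentiable on (0, r) with ψ′(t) ≥ −2(n−1)·t^{n−2}·(t² + f(t)²)^{−(n−1)/2} for all t ∈ (0, r), and that ψ(t) → 0 as t → 0⁺. Then the improper integral ∫_t^∞ s^{2−n}(log s + 1) ds is finite for every t ≥ 4(n−1), and f(r) ≤ f(t) ≤ f(r) + 4(n−1)·∫_t^∞ s^{2−n}(log s + 1) ds for every t ∈ [4(n−1), r]. -/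
open MeasureTheory Set Real Filter

set_option maxHeartbeats 1000000 in
/-- **Height bound** (analytic content of Lemma 5.6). Under the hypotheses of the gradient
estimate for the radial profiles of area-minimizing graphs in spatial Schwarzschild, the improper
integral `∫_t^∞ s^(2-n) (log s + 1) ds` is finite for every `t ≥ 4(n-1)`, and the height is
controlled: `f(r) ≤ f(t) ≤ f(r) + 4(n-1) ∫_t^∞ s^(2-n) (log s + 1) ds` on `[4(n-1), r]`. -/
theorem height_bound (n : ℕ) (hn : 4 ≤ n) (r : ℝ)
    (hr : 4 * ((n : ℝ) - 1) < r) (f f' ψ' : ℝ → ℝ)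
    (hderiv : ∀ t ∈ Set.Ioo (0 : ℝ) r, HasDerivAt f (f' t) t)
    (hfcont : ContinuousOn f (Set.Ioc 0 r))
    (hf'cont : ContinuousOn f' (Set.Ioc 0 r))
    (hf'nonpos : ∀ t ∈ Set.Ioo (0 : ℝ) r, f' t ≤ 0)
    (hgeom : ∀ t ∈ Set.Ioo (0 : ℝ) r, 1 ≤ t ^ 2 + f t ^ 2)
    (hψderiv : ∀ t ∈ Set.Ioo (0 : ℝ) r,
      HasDerivAt (fun u => u ^ ((n : ℝ) - 2) * f' u / Real.sqrt (1 + f' u ^ 2)) (ψ' t) t)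
    (hψ'ge : ∀ t ∈ Set.Ioo (0 : ℝ) r,
      -(2 * ((n : ℝ) - 1)) * t ^ ((n : ℝ) - 2) * (t ^ 2 + f t ^ 2) ^ (-(((n : ℝ) - 1) / 2))
        ≤ ψ' t)
    (hψ0 : Filter.Tendsto (fun u => u ^ ((n : ℝ) - 2) * f' u / Real.sqrt (1 + f' u ^ 2))
      (nhdsWithin 0 (Set.Ioi 0)) (nhds 0)) :
    (∀ t : ℝ, 4 * ((n : ℝ) - 1) ≤ t →
      IntegrableOn (fun s : ℝ => s ^ (2 - (n : ℝ)) * (Real.log s + 1)) (Set.Ici t)) ∧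
    (∀ t ∈ Set.Icc (4 * ((n : ℝ) - 1)) r,
      f r ≤ f t ∧
      f t ≤ f r + 4 * ((n : ℝ) - 1) * ∫ s in Set.Ici t, s ^ (2 - (n : ℝ)) * (Real.log s + 1)) := by
  have hn' : (4 : ℝ) ≤ (n : ℝ) := by exact_mod_cast hn
  set a : ℝ := 4 * ((n : ℝ) - 1) with ha
  have ha12 : (12 : ℝ) ≤ a := by simp only [ha]; linarith
  set ψ : ℝ → ℝ := fun u => u ^ ((n : ℝ) - 2) * f' u / Real.sqrt (1 + f' u ^ 2) with hψ
  set h : ℝ → ℝ := fun s : ℝ => s ^ (2 - (n : ℝ)) * (Real.log s + 1) with hh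
  -- Part 1: integrability
  have hint : ∀ t : ℝ, a ≤ t → IntegrableOn h (Set.Ici t) := by
    intro t ht
    have ht1 : (1 : ℝ) < t := by linarith
    have ht0 : (0 : ℝ) < t := by linarith
    rw [integrableOn_Ici_iff_integrableOn_Ioi]
    have hbig : IntegrableOn (fun s : ℝ => 2 * s ^ ((5 : ℝ) / 2 - (n : ℝ))) (Set.Ioi t) :=
      (integrableOn_Ioi_rpow_of_lt (by linarith) ht0).const_mul 2
    have hmeas : ContinuousOn h (Set.Ioi t) := by
      intro s hs
      have hs0 : (0 : ℝ) < s := lt_trans ht0 hs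
      exact (((Real.continuousAt_rpow_const s _ (Or.inl hs0.ne')).mul
        ((Real.continuousAt_log hs0.ne').add continuousAt_const))).continuousWithinAt
    refine MeasureTheory.Integrable.mono hbig
      (hmeas.aestronglyMeasurable measurableSet_Ioi) ?_
    refine (ae_restrict_iff' measurableSet_Ioi).2 (ae_of_all _ fun s hs => ?_)
    have hs1 : (1 : ℝ) < s := lt_trans ht1 hs
    have hs0 : (0 : ℝ) < s := by linarith
    have hlog : Real.log s + 1 ≤ 2 * s ^ ((1 : ℝ) / 2) := by
      have h1 : Real.log (s ^ ((1 : ℝ) / 2)) ≤ s ^ ((1 : ℝ) / 2) - 1 :=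
        Real.log_le_sub_one_of_pos (Real.rpow_pos_of_pos hs0 _)
      rw [Real.log_rpow hs0] at h1
      linarith
    have hlogpos : 0 ≤ Real.log s + 1 := by
      have := Real.log_nonneg hs1.le; linarith
    have hsp : (0 : ℝ) < s ^ (2 - (n : ℝ)) := Real.rpow_pos_of_pos hs0 _
    have hsp2 : (0 : ℝ) < s ^ ((1 : ℝ) / 2) := Real.rpow_pos_of_pos hs0 _
    rw [Real.norm_eq_abs, Real.norm_eq_abs, abs_of_nonneg (by positivity),
      abs_of_nonneg (by positivity)]
    calc s ^ (2 - (n : ℝ)) * (Real.log s + 1)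
        ≤ s ^ (2 - (n : ℝ)) * (2 * s ^ ((1 : ℝ) / 2)) :=
          mul_le_mul_of_nonneg_left hlog hsp.le
      _ = 2 * s ^ ((5 : ℝ) / 2 - (n : ℝ)) := by
          rw [show ((5 : ℝ) / 2 - (n : ℝ)) = (2 - (n : ℝ)) + (1 : ℝ) / 2 by ring,
            Real.rpow_add hs0]
          ring
  refine ⟨hint, ?_⟩
  -- ψ is continuous on Ioo 0 r
  have hψcont : ∀ u ∈ Set.Ioo (0 : ℝ) r, ContinuousAt ψ u := fun u hu =>
    (hψderiv u hu).continuousAt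
  have h1r : (1 : ℝ) < r := by linarith
  -- Stage 1: ψ 1 ≥ -2
  have hψ1 : -2 ≤ ψ 1 := by
    set F : ℝ → ℝ := fun u => ψ u + 2 * u ^ ((n : ℝ) - 1) with hF
    have hFmono : MonotoneOn F (Set.Ioc (0 : ℝ) 1) := by
      apply monotoneOn_of_hasDerivWithinAt_nonneg (convex_Ioc 0 1)
        (f' := fun u => ψ' u + 2 * (((n : ℝ) - 1) * u ^ ((n : ℝ) - 1 - 1)))
      · intro u hu
        have hu' : u ∈ Set.Ioo (0 : ℝ) r := ⟨hu.1, lt_of_le_of_lt hu.2 h1r⟩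
        exact ((hψcont u hu').continuousWithinAt).add
          (continuousAt_const.mul
            (Real.continuousAt_rpow_const u _ (Or.inl hu'.1.ne'))).continuousWithinAt
      · rw [interior_Ioc]
        intro u hu
        have hu' : u ∈ Set.Ioo (0 : ℝ) r := ⟨hu.1, lt_trans hu.2 h1r⟩
        exact ((hψderiv u hu').add
          ((Real.hasDerivAt_rpow_const (Or.inl hu'.1.ne')).const_mul 2)).hasDerivWithinAt
      · rw [interior_Ioc]
        intro u hu
        have hu' : u ∈ Set.Ioo (0 : ℝ) r := ⟨hu.1, lt_trans hu.2 h1r⟩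
        have hX1 : (u ^ 2 + f u ^ 2) ^ (-(((n : ℝ) - 1) / 2)) ≤ 1 :=
          Real.rpow_le_one_of_one_le_of_nonpos (hgeom u hu') (by linarith)
        have hup : (0 : ℝ) < u ^ ((n : ℝ) - 2) := Real.rpow_pos_of_pos hu'.1 _
        have hge := hψ'ge u hu'
        have he : (n : ℝ) - 1 - 1 = (n : ℝ) - 2 := by ring
        rw [he]
        nlinarith [mul_le_mul_of_nonneg_left hX1
          (mul_nonneg (by linarith : (0:ℝ) ≤ 2 * ((n : ℝ) - 1)) hup.le)]
    have hFlim : Filter.Tendsto F (nhdsWithin 0 (Set.Ioi 0)) (nhds 0) := by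
      have hc : ContinuousAt (fun u : ℝ => u ^ ((n : ℝ) - 1)) 0 :=
        Real.continuousAt_rpow_const 0 _ (Or.inr (by linarith))
      have h2 : Filter.Tendsto (fun u : ℝ => 2 * u ^ ((n : ℝ) - 1)) (nhdsWithin 0 (Set.Ioi 0))
          (nhds 0) := by
        have h3 : Filter.Tendsto (fun u : ℝ => 2 * u ^ ((n : ℝ) - 1))
            (nhdsWithin (0:ℝ) (Set.Ioi 0)) (nhds (2 * (0:ℝ) ^ ((n : ℝ) - 1))) :=
          (hc.tendsto.mono_left nhdsWithin_le_nhds).const_mul 2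
        simpa [Real.zero_rpow (show ((n : ℝ) - 1) ≠ 0 from ne_of_gt (by linarith))] using h3
      rw [hF]
      simpa using hψ0.add h2
    have hFle : ∀ᶠ u in nhdsWithin 0 (Set.Ioi 0), F u ≤ F 1 := by
      filter_upwards [Ioc_mem_nhdsGT one_pos] with u hu
      exact hFmono hu ⟨one_pos, le_refl 1⟩ hu.2
    have h0F : (0 : ℝ) ≤ F 1 := le_of_tendsto hFlim hFle
    have hF1 : F 1 = ψ 1 + 2 := by simp [hF]
    rw [hF1] at h0F
    linarith
  -- Stage 2: lower bound on ψ on (1, r)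
  have hψlb : ∀ s ∈ Set.Ioo (1 : ℝ) r, -2 - 2 * ((n : ℝ) - 1) * Real.log s ≤ ψ s := by
    intro s hs
    set G : ℝ → ℝ := fun u => ψ u + 2 * ((n : ℝ) - 1) * Real.log u with hG
    have hGmono : MonotoneOn G (Set.Icc (1 : ℝ) s) := by
      apply monotoneOn_of_hasDerivWithinAt_nonneg (convex_Icc 1 s)
        (f' := fun u => ψ' u + 2 * ((n : ℝ) - 1) * u⁻¹)
      · intro u hu
        have hu' : u ∈ Set.Ioo (0 : ℝ) r := ⟨by linarith [hu.1], lt_of_le_of_lt hu.2 hs.2⟩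
        exact ((hψcont u hu').continuousWithinAt).add
          (continuousAt_const.mul (Real.continuousAt_log hu'.1.ne')).continuousWithinAt
      · rw [interior_Icc]
        intro u hu
        have hu' : u ∈ Set.Ioo (0 : ℝ) r := ⟨by linarith [hu.1], lt_trans hu.2 hs.2⟩
        exact ((hψderiv u hu').add
          ((Real.hasDerivAt_log hu'.1.ne').const_mul (2 * ((n : ℝ) - 1)))).hasDerivWithinAt
      · rw [interior_Icc]
        intro u hu
        have hu1 : (1 : ℝ) < u := hu.1
        have hu0 : (0 : ℝ) < u := by linarith
        have hu' : u ∈ Set.Ioo (0 : ℝ) r := ⟨hu0, lt_trans hu.2 hs.2⟩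
        have hX : (u ^ 2 + f u ^ 2) ^ (-(((n : ℝ) - 1) / 2)) ≤ u ^ (-((n : ℝ) - 1)) := by
          have h1 : (u ^ 2 : ℝ) ≤ u ^ 2 + f u ^ 2 := by nlinarith [sq_nonneg (f u)]
          have h2 := Real.rpow_le_rpow_of_nonpos (by positivity) h1
            (by linarith : -(((n : ℝ) - 1) / 2) ≤ 0)
          refine le_trans h2 (le_of_eq ?_)
          rw [← Real.rpow_natCast u 2, ← Real.rpow_mul hu0.le]
          congr 1
          push_cast
          ring
        have hup : (0 : ℝ) < u ^ ((n : ℝ) - 2) := Real.rpow_pos_of_pos hu0 _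
        have hprod : u ^ ((n : ℝ) - 2) * u ^ (-((n : ℝ) - 1)) = u⁻¹ := by
          rw [← Real.rpow_add hu0,
            show (n : ℝ) - 2 + -((n : ℝ) - 1) = -1 by ring, Real.rpow_neg_one]
        have hge := hψ'ge u hu'
        have key : -(2 * ((n : ℝ) - 1)) * u⁻¹ ≤ ψ' u := by
          have h3 : 2 * ((n : ℝ) - 1) * u ^ ((n : ℝ) - 2) *
              (u ^ 2 + f u ^ 2) ^ (-(((n : ℝ) - 1) / 2)) ≤
              2 * ((n : ℝ) - 1) * u ^ ((n : ℝ) - 2) * u ^ (-((n : ℝ) - 1)) :=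
            mul_le_mul_of_nonneg_left hX
              (mul_nonneg (by linarith : (0:ℝ) ≤ 2 * ((n : ℝ) - 1)) hup.le)
          have h4 : 2 * ((n : ℝ) - 1) * u ^ ((n : ℝ) - 2) * u ^ (-((n : ℝ) - 1)) =
              2 * ((n : ℝ) - 1) * u⁻¹ := by
            rw [mul_assoc, hprod]
          nlinarith [hge]
        have hui : (0 : ℝ) < u⁻¹ := by positivity
        nlinarith [key]
    have hle := hGmono (Set.left_mem_Icc.2 hs.1.le)
      (Set.right_mem_Icc.2 hs.1.le) hs.1.le
    simp only [hG, Real.log_one, mul_zero, add_zero] at hle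
    linarith
  -- f' lower bound on [a, r)
  have hf'lb : ∀ s : ℝ, a ≤ s → s < r →
      -(4 * ((n : ℝ) - 1) * (s ^ (2 - (n : ℝ)) * (Real.log s + 1))) ≤ f' s := by
    intro s has hsr
    have hs1 : (1 : ℝ) < s := by linarith
    have hs0 : (0 : ℝ) < s := by linarith
    have hs' : s ∈ Set.Ioo (0 : ℝ) r := ⟨hs0, hsr⟩
    set c : ℝ := 2 * ((n : ℝ) - 1) * (s ^ (2 - (n : ℝ)) * (Real.log s + 1)) with hc
    have hlognn : 0 ≤ Real.log s := Real.log_nonneg hs1.le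
    have hsp : (0 : ℝ) < s ^ (2 - (n : ℝ)) := Real.rpow_pos_of_pos hs0 _
    have hc0 : 0 ≤ c := by
      rw [hc]
      exact mul_nonneg (by linarith) (by positivity)
    have hchalf : c ≤ 1 / 2 := by
      have h1 : s ^ (2 - (n : ℝ)) ≤ s ^ (-2 : ℝ) :=
        Real.rpow_le_rpow_of_exponent_le hs1.le (by linarith)
      have h2 : s ^ (-2 : ℝ) = (s ^ 2)⁻¹ := by
        rw [Real.rpow_neg hs0.le, ← Real.rpow_natCast s 2]
        norm_num
      rw [h2] at h1
      have hlog : Real.log s ≤ s - 1 := Real.log_le_sub_one_of_pos hs0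
      have h3 : c ≤ 2 * ((n : ℝ) - 1) * ((s ^ 2)⁻¹ * (Real.log s + 1)) := by
        rw [hc]
        have h5 := mul_le_mul_of_nonneg_right h1 (by linarith : (0:ℝ) ≤ Real.log s + 1)
        nlinarith [h5]
      have h4 : 2 * ((n : ℝ) - 1) * ((s ^ 2)⁻¹ * (Real.log s + 1)) ≤ 1 / 2 := by
        rw [show 2 * ((n : ℝ) - 1) * ((s ^ 2)⁻¹ * (Real.log s + 1)) =
          (2 * ((n : ℝ) - 1) * (Real.log s + 1)) / s ^ 2 by ring,
          div_le_iff₀ (by positivity : (0:ℝ) < s ^ 2)]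
        have h6 : 2 * ((n : ℝ) - 1) * (Real.log s + 1) ≤ 2 * ((n : ℝ) - 1) * s :=
          mul_le_mul_of_nonneg_left (by linarith) (by linarith)
        have h7 : a * s ≤ s * s := mul_le_mul_of_nonneg_right has hs0.le
        rw [ha] at h7
        nlinarith [h6, h7]
      linarith
    -- ψ s ≥ -(c * s^(n-2))
    have hψs : -(c * s ^ ((n : ℝ) - 2)) ≤ ψ s := by
      have h1 := hψlb s ⟨hs1, hsr⟩
      have hone : s ^ (2 - (n : ℝ)) * s ^ ((n : ℝ) - 2) = 1 := by
        rw [← Real.rpow_add hs0, show (2 - (n : ℝ)) + ((n : ℝ) - 2) = 0 by ring,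
          Real.rpow_zero]
      have h2 : c * s ^ ((n : ℝ) - 2) = 2 * ((n : ℝ) - 1) * (Real.log s + 1) := by
        calc c * s ^ ((n : ℝ) - 2)
            = 2 * ((n : ℝ) - 1) * (Real.log s + 1) *
              (s ^ (2 - (n : ℝ)) * s ^ ((n : ℝ) - 2)) := by rw [hc]; ring
          _ = 2 * ((n : ℝ) - 1) * (Real.log s + 1) := by rw [hone, mul_one]
      rw [h2]
      linarith
    -- extract f' bound
    set q : ℝ := Real.sqrt (1 + f' s ^ 2) with hq
    have hq0 : (0 : ℝ) < q := Real.sqrt_pos.2 (by positivity)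
    have hq2 : q ^ 2 = 1 + f' s ^ 2 := Real.sq_sqrt (by positivity)
    have hψval : ψ s = s ^ ((n : ℝ) - 2) * f' s / q := rfl
    have hsp2 : (0 : ℝ) < s ^ ((n : ℝ) - 2) := Real.rpow_pos_of_pos hs0 _
    have hfq : -(c * q) ≤ f' s := by
      have h5 : -(c * s ^ ((n : ℝ) - 2)) * q ≤ s ^ ((n : ℝ) - 2) * f' s := by
        have h5' := hψs
        rw [hψval] at h5'
        exact (le_div_iff₀ hq0).1 h5'
      have h6 : s ^ ((n : ℝ) - 2) * (-(c * q)) ≤ s ^ ((n : ℝ) - 2) * f' s := by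
        nlinarith [h5]
      exact le_of_mul_le_mul_left h6 hsp2
    have hf'0 : f' s ≤ 0 := hf'nonpos s hs'
    have hbound : -(2 * c) ≤ f' s := by
      by_contra hcon
      push_neg at hcon
      have hcq : 0 ≤ c * q := mul_nonneg hc0 hq0.le
      have h7 : f' s ^ 2 ≤ c ^ 2 * q ^ 2 := by
        nlinarith [mul_nonneg (show (0:ℝ) ≤ c * q + f' s by linarith)
          (show (0:ℝ) ≤ c * q - f' s by linarith)]
      have h8 : f' s ^ 2 ≤ c ^ 2 * (1 + f' s ^ 2) := by rw [← hq2]; exact h7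
      have hcsq : c ^ 2 ≤ 1 / 4 := by nlinarith
      have h9 : (3 / 4 : ℝ) * f' s ^ 2 ≤ c ^ 2 := by nlinarith [sq_nonneg (f' s)]
      have h10 : 4 * c ^ 2 < f' s ^ 2 := by
        nlinarith [mul_pos (show (0:ℝ) < -f' s - 2 * c by linarith)
          (show (0:ℝ) < -f' s + 2 * c by linarith)]
      nlinarith [sq_nonneg c]
    have h2c : 2 * c = 4 * ((n : ℝ) - 1) * (s ^ (2 - (n : ℝ)) * (Real.log s + 1)) := by
      rw [hc]; ring
    rw [h2c] at hbound
    exact hbound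
  -- Final assembly
  intro t ht
  obtain ⟨hta, htr⟩ := ht
  have ht1 : (1 : ℝ) < t := by linarith
  have ht0 : (0 : ℝ) < t := by linarith
  have hIcc : Set.Icc t r ⊆ Set.Ioc 0 r := fun x hx => ⟨lt_of_lt_of_le ht0 hx.1, hx.2⟩
  have hcontf : ContinuousOn f (Set.Icc t r) := hfcont.mono hIcc
  have hd : ∀ x ∈ Set.Ioo t r, HasDerivWithinAt f (f' x) (Set.Ioi x) x := fun x hx =>
    (hderiv x ⟨lt_trans ht0 hx.1, hx.2⟩).hasDerivWithinAt
  have hf'int : IntervalIntegrable f' volume t r :=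
    (hf'cont.mono hIcc).intervalIntegrable_of_Icc htr
  have hFTC : ∫ y in t..r, f' y = f r - f t :=
    intervalIntegral.integral_eq_sub_of_hasDeriv_right_of_le htr hcontf hd hf'int
  have hFTC' : ∫ y in Set.Ioo t r, f' y = f r - f t := by
    rw [← MeasureTheory.integral_Ioc_eq_integral_Ioo, ← intervalIntegral.integral_of_le htr,
      hFTC]
  have hf'io : IntegrableOn f' (Set.Ioo t r) :=
    ((hf'cont.mono hIcc).integrableOn_Icc).mono_set Set.Ioo_subset_Icc_self
  constructor
  · -- f r ≤ f t
    rw [← sub_nonpos, ← hFTC']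
    apply MeasureTheory.integral_nonpos_of_ae
    refine (ae_restrict_iff' measurableSet_Ioo).2 (ae_of_all _ fun x hx => ?_)
    exact hf'nonpos x ⟨lt_trans ht0 hx.1, hx.2⟩
  · -- upper bound
    set B : ℝ → ℝ := fun s => 4 * ((n : ℝ) - 1) * (s ^ (2 - (n : ℝ)) * (Real.log s + 1)) with hB
    have hBint : IntegrableOn B (Set.Ici t) := (hint t hta).const_mul _
    have hBio : IntegrableOn B (Set.Ioo t r) :=
      hBint.mono_set (fun x hx => le_of_lt hx.1)
    have hmono : ∫ y in Set.Ioo t r, (-B y) ≤ ∫ y in Set.Ioo t r, f' y := by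
      apply MeasureTheory.setIntegral_mono_on hBio.neg hf'io measurableSet_Ioo
      intro x hx
      exact hf'lb x (le_of_lt (lt_of_le_of_lt hta hx.1)) hx.2
    rw [MeasureTheory.integral_neg, hFTC'] at hmono
    have hstep : f t ≤ f r + ∫ y in Set.Ioo t r, B y := by linarith
    have hIoi : ∫ y in Set.Ioo t r, B y ≤ ∫ y in Set.Ici t, B y := by
      apply MeasureTheory.setIntegral_mono_set hBint
      · refine (ae_restrict_iff' measurableSet_Ici).2 (ae_of_all _ fun x hx => ?_)
        have hx1 : (1 : ℝ) ≤ x := by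
          have : t ≤ x := hx
          linarith
        have hx0 : (0 : ℝ) < x := by linarith
        have hl := Real.log_nonneg hx1
        have hp := Real.rpow_pos_of_pos hx0 (2 - (n : ℝ))
        simp only [hB]
        exact mul_nonneg (by linarith) (mul_nonneg hp.le (by linarith))
      · exact HasSubset.Subset.eventuallyLE (fun x hx => le_of_lt hx.1)
    have hBI : ∫ y in Set.Ici t, B y =
        4 * ((n : ℝ) - 1) * ∫ s in Set.Ici t, s ^ (2 - (n : ℝ)) * (Real.log s + 1) := by
      simp only [hB]
      rw [MeasureTheory.integral_const_mul]
    rw [hBI] at hIoi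
    rw [ha, hh]
    linarith
end

section
/- Let n ≥ 4 be an integer, let a > 0 and t₀ > 0 satisfy a ≤ t₀^{n−2}. Then ∫_{t₀}^∞ a·(s^{2n−4} − a²)^{−1/2} ds ≤ a^{1/(n−2)}·∫₁^∞ (u^{2n−4} − 1)^{−1/2} du, and in particular the left-hand integral is finite. -/
open MeasureTheory Set Real

private lemma aux_g_integrable {p : ℝ} (hp : 4 ≤ p) :
    IntegrableOn (fun u : ℝ => (u ^ p - 1) ^ (-(1 : ℝ) / 2)) (Set.Ioi (1 : ℝ)) := by
  have hposall : ∀ u : ℝ, 1 < u → 0 < u ^ p - 1 := by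
    intro u hu
    have h0 := Real.rpow_lt_rpow_of_exponent_lt hu (show (0:ℝ) < p by linarith)
    rw [Real.rpow_zero] at h0
    linarith
  have hcont : ContinuousOn (fun u : ℝ => (u ^ p - 1) ^ (-(1 : ℝ) / 2)) (Set.Ioi 1) := by
    refine ContinuousOn.rpow_const ?_ fun x hx => Or.inl (ne_of_gt (hposall x hx))
    exact (continuousOn_id.rpow_const fun x hx => Or.inl
      (ne_of_gt (lt_trans one_pos hx))).sub continuousOn_const
  have hsplit : Set.Ioi (1 : ℝ) = Set.Ioc 1 2 ∪ Set.Ioi 2 := (Set.Ioc_union_Ioi_eq_Ioi one_le_two).symm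
  rw [hsplit]
  apply IntegrableOn.union
  · -- on (1,2], compare with (u-1)^(-1/2)
    have h1 : IntervalIntegrable (fun x : ℝ => x ^ (-(1 : ℝ) / 2)) volume 0 1 :=
      intervalIntegral.intervalIntegrable_rpow' (by norm_num)
    have h2 := h1.comp_sub_right 1
    rw [show (0:ℝ)+1 = 1 by norm_num, show (1:ℝ)+1 = 2 by norm_num] at h2
    have hInt : IntegrableOn (fun u : ℝ => (u - 1) ^ (-(1 : ℝ) / 2)) (Set.Ioc 1 2) := h2.1
    refine Integrable.mono' hInt
      ((hcont.mono (Set.Ioc_subset_Ioi_self)).aestronglyMeasurable measurableSet_Ioc) ?_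
    rw [ae_restrict_iff' measurableSet_Ioc]
    refine Filter.Eventually.of_forall fun u hu => ?_
    have hu1 : (1 : ℝ) < u := hu.1
    have hle : u - 1 ≤ u ^ p - 1 := by
      have : u ^ (1 : ℝ) ≤ u ^ p := Real.rpow_le_rpow_of_exponent_le hu1.le (by linarith)
      rw [Real.rpow_one] at this
      linarith
    have hpos : (0 : ℝ) < u ^ p - 1 := lt_of_lt_of_le (by linarith) hle
    rw [Real.norm_eq_abs, abs_of_nonneg (Real.rpow_nonneg hpos.le _)]
    exact Real.rpow_le_rpow_of_nonpos (by linarith) hle (by norm_num)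
  · -- on (2,∞), compare with 2^(1/2) * u^(-(p/2))
    have hInt : IntegrableOn (fun u : ℝ => (2 : ℝ) ^ ((1 : ℝ) / 2) * u ^ (-(p / 2)))
        (Set.Ioi (2 : ℝ)) :=
      (integrableOn_Ioi_rpow_of_lt (by linarith) (by norm_num)).const_mul _
    refine Integrable.mono' hInt
      ((hcont.mono (Set.Ioi_subset_Ioi one_le_two)).aestronglyMeasurable measurableSet_Ioi) ?_
    rw [ae_restrict_iff' measurableSet_Ioi]
    refine Filter.Eventually.of_forall fun u hu => ?_
    have hu2 : (2 : ℝ) < u := hu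
    have hu0 : (0 : ℝ) < u := by linarith
    have h2p : (2 : ℝ) ≤ u ^ p := by
      calc (2 : ℝ) = 2 ^ (1 : ℝ) := (Real.rpow_one 2).symm
        _ ≤ 2 ^ p := Real.rpow_le_rpow_of_exponent_le one_le_two (by linarith)
        _ ≤ u ^ p := Real.rpow_le_rpow (by norm_num) hu2.le (by linarith)
    have hhalf : u ^ p / 2 ≤ u ^ p - 1 := by linarith
    have hpos : (0 : ℝ) < u ^ p - 1 := lt_of_lt_of_le (by linarith) hhalf
    rw [Real.norm_eq_abs, abs_of_nonneg (Real.rpow_nonneg hpos.le _)]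
    have step : (u ^ p - 1) ^ (-(1 : ℝ) / 2) ≤ (u ^ p / 2) ^ (-(1 : ℝ) / 2) :=
      Real.rpow_le_rpow_of_nonpos (by linarith) hhalf (by norm_num)
    refine step.trans (le_of_eq ?_)
    rw [Real.div_rpow (Real.rpow_nonneg hu0.le _) (by norm_num : (0:ℝ) ≤ 2),
      ← Real.rpow_mul hu0.le]
    rw [show p * (-(1 : ℝ) / 2) = -(p / 2) by ring,
      show (-(1 : ℝ) / 2) = -((1:ℝ)/2) by ring, Real.rpow_neg (by norm_num : (0:ℝ) ≤ 2)]
    simp [div_eq_mul_inv, inv_inv, mul_comm]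

/-- **Scaling estimate** from Lemma 6.8 ('final bound'): for `n ≥ 4`, `a > 0`, `t₀ > 0` with
`a ≤ t₀^(n-2)`, the flux integral satisfies
`∫_{t₀}^∞ a (s^(2n-4) - a²)^(-1/2) ds ≤ a^(1/(n-2)) ∫₁^∞ (u^(2n-4) - 1)^(-1/2) du`,
and in particular it is finite. -/
theorem scaling_estimate (n : ℕ) (hn : 4 ≤ n) (a t₀ : ℝ) (ha : 0 < a) (ht₀ : 0 < t₀)
    (hat : a ≤ t₀ ^ ((n : ℝ) - 2)) :
    IntegrableOn (fun s : ℝ => a * (s ^ (2 * (n : ℝ) - 4) - a ^ 2) ^ (-(1 : ℝ) / 2))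
      (Set.Ioi t₀) ∧
    ∫ s in Set.Ioi t₀, a * (s ^ (2 * (n : ℝ) - 4) - a ^ 2) ^ (-(1 : ℝ) / 2)
      ≤ a ^ ((1 : ℝ) / ((n : ℝ) - 2)) *
        ∫ u in Set.Ioi (1 : ℝ), (u ^ (2 * (n : ℝ) - 4) - 1) ^ (-(1 : ℝ) / 2) := by
  have hn4 : (4 : ℝ) ≤ (n : ℝ) := by exact_mod_cast hn
  set p : ℝ := 2 * (n : ℝ) - 4 with hpdef
  set q : ℝ := (n : ℝ) - 2 with hqdef
  have hq2 : (2 : ℝ) ≤ q := by simp only [hqdef]; linarith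
  have hq0 : (0 : ℝ) < q := by linarith
  have hp4 : (4 : ℝ) ≤ p := by simp only [hpdef]; linarith
  have hp0 : (0 : ℝ) < p := by linarith
  set c : ℝ := a ^ ((1 : ℝ) / q) with hcdef
  have hc : 0 < c := Real.rpow_pos_of_pos ha _
  -- c ^ p = a ^ 2
  have hcp : c ^ p = a ^ 2 := by
    rw [hcdef, ← Real.rpow_natCast a 2, ← Real.rpow_mul ha.le]
    congr 1
    field_simp
    simp only [hpdef, hqdef]; ring
  -- c ≤ t₀
  have hct : c ≤ t₀ := by
    have h1 : a ^ ((1 : ℝ) / q) ≤ (t₀ ^ q) ^ ((1 : ℝ) / q) :=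
      Real.rpow_le_rpow ha.le hat (by positivity)
    rwa [← Real.rpow_mul ht₀.le, mul_one_div_cancel hq0.ne', Real.rpow_one] at h1
  set g : ℝ → ℝ := fun u => (u ^ p - 1) ^ (-(1 : ℝ) / 2) with hgdef
  set f : ℝ → ℝ := fun s => a * (s ^ p - a ^ 2) ^ (-(1 : ℝ) / 2) with hfdef
  have hg : IntegrableOn g (Set.Ioi 1) := aux_g_integrable hp4
  -- key pointwise equality on Ioi c
  have hA : ((a ^ 2)⁻¹ : ℝ) ^ (-(1 : ℝ) / 2) = a := by
    rw [← Real.rpow_natCast a 2, ← Real.rpow_neg ha.le, ← Real.rpow_mul ha.le]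
    norm_num
  have keyeq : ∀ s ∈ Set.Ioi c, g (c⁻¹ * s) = f s := by
    intro s hs
    have hs0 : 0 < s := lt_trans hc hs
    have hbase : a ^ 2 < s ^ p := by
      rw [← hcp]; exact Real.rpow_lt_rpow hc.le hs hp0
    have hsp : (c⁻¹ * s) ^ p = (a ^ 2)⁻¹ * s ^ p := by
      rw [Real.mul_rpow (by positivity) hs0.le, Real.inv_rpow hc.le, hcp]
    have ha2 : (0:ℝ) < a ^ 2 := by positivity
    simp only [hgdef, hfdef]
    rw [hsp, show (a ^ 2)⁻¹ * s ^ p - 1 = (a ^ 2)⁻¹ * (s ^ p - a ^ 2) by field_simp,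
      Real.mul_rpow (by positivity) (by linarith), hA]
  -- integrability on Ioi c
  have hgc : IntegrableOn (fun s => g (c⁻¹ * s)) (Set.Ioi c) := by
    have := (integrableOn_Ioi_comp_mul_left_iff g c (inv_pos.2 hc)).2
    rw [inv_mul_cancel₀ hc.ne'] at this
    exact this hg
  have hfc : IntegrableOn f (Set.Ioi c) :=
    hgc.congr_fun keyeq measurableSet_Ioi
  have hft : IntegrableOn f (Set.Ioi t₀) := hfc.mono_set (Set.Ioi_subset_Ioi hct)
  refine ⟨hft, ?_⟩
  -- integral computation
  have hint : ∫ s in Set.Ioi c, f s = c * ∫ u in Set.Ioi 1, g u := by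
    rw [← setIntegral_congr_fun measurableSet_Ioi keyeq,
      integral_comp_mul_left_Ioi g c (inv_pos.2 hc), inv_inv, inv_mul_cancel₀ hc.ne',
      smul_eq_mul]
  have hnonneg : 0 ≤ᵐ[volume.restrict (Set.Ioi c)] f := by
    refine (ae_restrict_iff' measurableSet_Ioi).2 (Filter.Eventually.of_forall fun s hs => ?_)
    have hbase : a ^ 2 < s ^ p := by
      rw [← hcp]; exact Real.rpow_lt_rpow hc.le hs hp0
    have : (0:ℝ) ≤ (s ^ p - a ^ 2) ^ (-(1 : ℝ) / 2) :=
      Real.rpow_nonneg (sub_nonneg.2 hbase.le) _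
    simp only [hfdef, Pi.zero_apply]
    exact mul_nonneg ha.le this
  have hmono : ∫ s in Set.Ioi t₀, f s ≤ ∫ s in Set.Ioi c, f s :=
    setIntegral_mono_set hfc hnonneg ((Set.Ioi_subset_Ioi hct).eventuallyLE)
  calc ∫ s in Set.Ioi t₀, f s ≤ ∫ s in Set.Ioi c, f s := hmono
    _ = c * ∫ u in Set.Ioi 1, g u := hint
end

section
/- Let n ≥ 3 be an integer, let a > 0 and t₀ > a^{1/(n−2)}, let C ∈ ℝ, and define f : [t₀, ∞) → ℝ by f(t) = C − ∫_{t₀}^t a·(s^{2n−4} − a²)^{−1/2} ds. Then f is differentiable on (t₀, ∞) and t^{n−2}·f′(t)/√(1 + f′(t)²) = −a for every t > t₀. -/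
open MeasureTheory Set Real Topology

/-- **Catenoid-type solutions** of the flat radial minimal surface equation (Lemma 6.8): for
`f(t) = C - ∫_{t₀}^t a (s^(2n-4) - a²)^(-1/2) ds`, the function `f` is differentiable on
`(t₀, ∞)` and the flux quantity `t^(n-2) f'(t)/√(1 + f'(t)²)` equals the constant `-a`. -/
theorem catenoid_flux (n : ℕ) (hn : 3 ≤ n) (a t₀ C : ℝ) (ha : 0 < a)
    (ht₀ : a ^ ((1 : ℝ) / ((n : ℝ) - 2)) < t₀) :
    let f : ℝ → ℝ :=
      fun t => C - ∫ s in t₀..t, a * (s ^ (2 * (n : ℝ) - 4) - a ^ 2) ^ (-(1 : ℝ) / 2)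
    ∀ t : ℝ, t₀ < t →
      DifferentiableAt ℝ f t ∧
      t ^ ((n : ℝ) - 2) * deriv f t / Real.sqrt (1 + deriv f t ^ 2) = -a := by
  intro f t ht
  have hn2 : (0:ℝ) < (n:ℝ) - 2 := by
    have : (3:ℝ) ≤ (n:ℝ) := by exact_mod_cast hn
    linarith
  have ht₀pos : 0 < t₀ := lt_trans (Real.rpow_pos_of_pos ha _) ht₀
  set g : ℝ → ℝ := fun s => a * (s ^ (2 * (n : ℝ) - 4) - a ^ 2) ^ (-(1 : ℝ) / 2) with hg
  -- key positivity: a² < s^(2n-4) for s ≥ t₀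
  have key : ∀ s : ℝ, t₀ ≤ s → a ^ 2 < s ^ (2 * (n:ℝ) - 4) := by
    intro s hs
    have hspos : 0 < s := lt_of_lt_of_le ht₀pos hs
    have h1 : a ^ ((1:ℝ)/((n:ℝ)-2)) < s := lt_of_lt_of_le ht₀ hs
    have h2 : a < s ^ ((n:ℝ) - 2) := by
      have h := Real.rpow_lt_rpow (Real.rpow_pos_of_pos ha _).le h1 hn2
      rwa [← Real.rpow_mul ha.le, one_div_mul_cancel hn2.ne', Real.rpow_one] at h
    have h4 : (s ^ ((n:ℝ)-2)) ^ 2 = s ^ (2 * (n:ℝ) - 4) := by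
      rw [sq, ← Real.rpow_add hspos]
      congr 1; ring
    nlinarith [h2, ha, Real.rpow_pos_of_pos hspos ((n:ℝ)-2)]
  have hcont : ∀ s : ℝ, t₀ ≤ s → ContinuousAt g s := by
    intro s hs
    have hspos : 0 < s := lt_of_lt_of_le ht₀pos hs
    have hu : 0 < s ^ (2 * (n:ℝ) - 4) - a ^ 2 := sub_pos.mpr (key s hs)
    have c1 : ContinuousAt (fun x : ℝ => x ^ (2 * (n:ℝ) - 4)) s :=
      Real.continuousAt_rpow_const s _ (Or.inl hspos.ne')
    have c2 : ContinuousAt (fun x : ℝ => x ^ (2 * (n:ℝ) - 4) - a ^ 2) s :=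
      c1.sub continuousAt_const
    exact continuousAt_const.mul (c2.rpow_const (Or.inl hu.ne'))
  have hint : IntervalIntegrable g volume t₀ t := by
    apply ContinuousOn.intervalIntegrable
    intro s hs
    rw [uIcc_of_le ht.le] at hs
    exact (hcont s hs.1).continuousWithinAt
  have hmeas : StronglyMeasurableAtFilter g (𝓝 t) volume :=
    ContinuousOn.stronglyMeasurableAtFilter isOpen_Ioi
      (fun s hs => (hcont s (le_of_lt hs)).continuousWithinAt) t ht
  have hI : HasDerivAt (fun u => ∫ s in t₀..u, g s) (g t) t :=
    intervalIntegral.integral_hasDerivAt_right hint hmeas (hcont t ht.le)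
  have hf : HasDerivAt f (-(g t)) t := by
    have h := (hasDerivAt_const t C).sub hI
    rw [zero_sub] at h
    exact h
  refine ⟨hf.differentiableAt, ?_⟩
  -- algebra
  set u : ℝ := t ^ (2 * (n:ℝ) - 4) - a ^ 2 with hu_def
  have hu : 0 < u := sub_pos.mpr (key t ht.le)
  have hsu : 0 < Real.sqrt u := Real.sqrt_pos.mpr hu
  have hsu2 : (Real.sqrt u) ^ 2 = u := Real.sq_sqrt hu.le
  set tp : ℝ := t ^ ((n:ℝ) - 2) with htp_def
  have htpos : 0 < t := lt_trans ht₀pos ht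
  have htp : 0 < tp := Real.rpow_pos_of_pos htpos _
  have htp2 : tp ^ 2 = u + a ^ 2 := by
    rw [htp_def, sq, ← Real.rpow_add htpos, hu_def]
    have : (n:ℝ) - 2 + ((n:ℝ) - 2) = 2 * (n:ℝ) - 4 := by ring
    rw [this]; ring
  have hd : deriv f t = -(a * (Real.sqrt u)⁻¹) := by
    rw [hf.deriv, hg]
    have : u ^ (-(1:ℝ)/2) = (Real.sqrt u)⁻¹ := by
      rw [neg_div, Real.rpow_neg hu.le, Real.sqrt_eq_rpow]
    simp only [← hu_def, this]
  have h1 : 1 + (-(a * (Real.sqrt u)⁻¹)) ^ 2 = (u + a ^ 2) / u := by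
    rw [neg_sq, mul_pow, inv_pow, hsu2]
    field_simp
  have h2 : Real.sqrt ((u + a ^ 2) / u) = tp / Real.sqrt u := by
    rw [← htp2, Real.sqrt_div (sq_nonneg tp), Real.sqrt_sq htp.le]
  rw [hd, h1, h2]
  field_simp
end

section
/- Let n ≥ 3 be an integer and define φ : ℝⁿ → ℝ by φ(x) = 1 + (1 + (|x|²)^{n−2})^{−1/2}. Then φ is smooth on ℝⁿ and its Laplacian satisfies Δφ(x) = −3(n−2)²·(|x|²)^{n−3}·(1 + (|x|²)^{n−2})^{−5/2} for every x ∈ ℝⁿ (where (|x|²)^{n−3} is interpreted as 1 when n = 3). In particular Δφ(x) ≤ 0 for all x, that is, φ is superharmonic on ℝⁿ. -/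
open MeasureTheory Set Real

noncomputable def gg (m : ℕ) (t : ℝ) : ℝ := (1 + t ^ m) ^ (-(1:ℝ)/2)
noncomputable def gg1 (m : ℕ) (t : ℝ) : ℝ :=
  -((m:ℝ)/2) * t ^ (m-1) * (1 + t ^ m) ^ (-(3:ℝ)/2)
noncomputable def gg2 (m : ℕ) (t : ℝ) : ℝ :=
  -((m:ℝ)/2) * ((m:ℝ)-1) * t ^ (m-2) * (1 + t ^ m) ^ (-(3:ℝ)/2)
  + (3*(m:ℝ)^2/4) * t ^ (2*m-2) * (1 + t ^ m) ^ (-(5:ℝ)/2)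

lemma hasDerivAt_gg {m : ℕ} (hm : 1 ≤ m) {t : ℝ} (ht : 0 < 1 + t ^ m) :
    HasDerivAt (gg m) (gg1 m t) t := by
  have h1 : HasDerivAt (fun s : ℝ => 1 + s ^ m) ((m:ℝ) * t ^ (m-1)) t :=
    (hasDerivAt_pow m t).const_add 1
  have h2 := (Real.hasDerivAt_rpow_const (x := 1 + t ^ m) (p := -(1:ℝ)/2)
    (Or.inl ht.ne')).comp t h1
  refine h2.congr_deriv ?_
  unfold gg1
  rw [show (-(1:ℝ)/2 - 1) = -(3:ℝ)/2 by norm_num]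
  ring

lemma hasDerivAt_gg1 {m : ℕ} (hm : 1 ≤ m) {t : ℝ} (ht : 0 < 1 + t ^ m) :
    HasDerivAt (gg1 m) (gg2 m t) t := by
  have h1 : HasDerivAt (fun s : ℝ => 1 + s ^ m) ((m:ℝ) * t ^ (m-1)) t :=
    (hasDerivAt_pow m t).const_add 1
  have h2 := (Real.hasDerivAt_rpow_const (x := 1 + t ^ m) (p := -(3:ℝ)/2)
    (Or.inl ht.ne')).comp t h1
  have h3 : HasDerivAt (fun s : ℝ => s ^ (m-1)) (((m-1 : ℕ):ℝ) * t ^ (m-1-1)) t :=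
    hasDerivAt_pow (m-1) t
  have h4 := (h3.mul h2).const_mul (-((m:ℝ)/2))
  have hfun : gg1 m = fun y => -((m:ℝ)/2) *
      (y ^ (m-1) * ((fun x : ℝ => x ^ (-(3:ℝ)/2)) ∘ fun s : ℝ => 1 + s ^ m) y) := by
    funext y; simp only [gg1, Function.comp]; ring
  rw [hfun]
  refine h4.congr_deriv ?_
  unfold gg2
  rw [show (-(3:ℝ)/2 - 1) = -(5:ℝ)/2 by norm_num]
  rw [Nat.cast_sub hm]
  rw [show m - 1 - 1 = m - 2 from by omega]
  rw [show 2*m - 2 = (m-1) + (m-1) from by omega, pow_add]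
  push_cast
  simp only [Function.comp_apply]
  ring

lemma gg_key {m : ℕ} (hm : 1 ≤ m) {t : ℝ} (ht : 0 ≤ t) :
    4 * t * gg2 m t + 2 * ((m:ℝ) + 2) * gg1 m t
      = -(3 * (m:ℝ)^2) * t ^ (m-1) * (1 + t ^ m) ^ (-(5:ℝ)/2) := by
  have hA : (0:ℝ) < 1 + t ^ m := by positivity
  have hsplit : (1 + t ^ m) ^ (-(3:ℝ)/2) = (1 + t ^ m) * (1 + t ^ m) ^ (-(5:ℝ)/2) := by
    rw [show (-(3:ℝ)/2) = 1 + (-(5:ℝ)/2) by norm_num, Real.rpow_add hA, Real.rpow_one]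
  unfold gg1 gg2
  rw [hsplit]
  rcases Nat.exists_eq_add_of_le hm with ⟨k, hk⟩
  rcases k with _ | k
  · subst hk; norm_num; ring
  · have hk' : m = k + 2 := by omega
    subst hk'
    rw [show k + 2 - 1 = k + 1 from rfl, show k + 2 - 2 = k from rfl,
      show 2*(k+2) - 2 = 2*k + 2 from by omega]
    push_cast
    ring

/-- The conformal factor `φ(x) = 1 + (1 + (|x|²)^(n-2))^(-1/2)` of Lemma 7.1 ('localization') is
smooth, its Laplacian is `Δφ(x) = -3(n-2)² (|x|²)^(n-3) (1 + (|x|²)^(n-2))^(-5/2)`, and in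
particular `φ` is superharmonic on `ℝⁿ`. -/
theorem schwarzschild_like_superharmonic (n : ℕ) (hn : 3 ≤ n) :
    let φ : EuclideanSpace ℝ (Fin n) → ℝ :=
      fun x => 1 + (1 + (‖x‖ ^ 2) ^ (n - 2)) ^ (-(1 : ℝ) / 2)
    ContDiff ℝ (⊤ : ℕ∞) φ ∧
    (∀ x : EuclideanSpace ℝ (Fin n),
      laplacian φ x
        = -(3 * ((n : ℝ) - 2) ^ 2) * (‖x‖ ^ 2) ^ (n - 3)
            * (1 + (‖x‖ ^ 2) ^ (n - 2)) ^ (-(5 : ℝ) / 2)) ∧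
    (∀ x : EuclideanSpace ℝ (Fin n), laplacian φ x ≤ 0) := by
  intro φ
  have hm : 1 ≤ n - 2 := by omega
  set m := n - 2 with hmdef
  have hφdef : φ = fun x : EuclideanSpace ℝ (Fin n) => 1 + gg m (‖x‖^2) := rfl
  have hpos : ∀ x : EuclideanSpace ℝ (Fin n), (0:ℝ) < 1 + (‖x‖^2) ^ m := fun x => by positivity
  have hu : ∀ x : EuclideanSpace ℝ (Fin n),
      HasFDerivAt (fun y : EuclideanSpace ℝ (Fin n) => ‖y‖^2) (2 • (innerSL ℝ x)) x :=
    fun x => (hasStrictFDerivAt_norm_sq x).hasFDerivAt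
  -- smoothness
  have hsmooth : ContDiff ℝ (⊤ : ℕ∞) φ := by
    have hgs : ContDiffOn ℝ (⊤ : ℕ∞) (fun t : ℝ => 1 + gg m t) {t : ℝ | 0 < 1 + t ^ m} := by
      intro t ht
      apply ContDiffAt.contDiffWithinAt
      have h1 : ContDiffAt ℝ (⊤ : ℕ∞) (fun s : ℝ => 1 + s ^ m) t :=
        (contDiff_const.add (contDiff_id.pow m)).contDiffAt
      have h2 : ContDiffAt ℝ (⊤ : ℕ∞) (fun x : ℝ => x ^ (-(1:ℝ)/2)) (1 + t ^ m) :=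
        Real.contDiffAt_rpow_const_of_ne (ne_of_gt ht)
      have h3 := h2.comp t h1
      exact contDiffAt_const.add (show ContDiffAt ℝ (⊤ : ℕ∞) (gg m) t from h3)
    have hus : ContDiff ℝ (⊤ : ℕ∞) (fun x : EuclideanSpace ℝ (Fin n) => ‖x‖ ^ 2) :=
      contDiff_norm_sq ℝ
    exact hgs.comp_contDiff hus (fun x => hpos x)
  -- first derivative
  have hφ1 : ∀ (x : EuclideanSpace ℝ (Fin n)) (i : Fin n),
      fderiv ℝ φ x (EuclideanSpace.single i 1) = gg1 m (‖x‖^2) * (2 * x i) := by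
    intro x i
    have h : HasFDerivAt φ (gg1 m (‖x‖^2) • (2 • innerSL ℝ x)) x :=
      by have h0 := (hasDerivAt_gg hm (hpos x)).comp_hasFDerivAt x (hu x); exact h0.const_add 1
    rw [h.fderiv]
    simp [EuclideanSpace.inner_single_right, real_inner_comm]
  -- Laplacian computation
  have hlap : ∀ x : EuclideanSpace ℝ (Fin n),
      laplacian φ x = 4 * ‖x‖^2 * gg2 m (‖x‖^2) + 2 * (n:ℝ) * gg1 m (‖x‖^2) := by
    intro x
    have hterm : ∀ i : Fin n,
        fderiv ℝ (fun y => fderiv ℝ φ y (EuclideanSpace.single i 1)) x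
            (EuclideanSpace.single i 1)
          = 4 * (x i * x i) * gg2 m (‖x‖^2) + 2 * gg1 m (‖x‖^2) := by
      intro i
      have heq : (fun y => fderiv ℝ φ y (EuclideanSpace.single i 1))
          = fun y : EuclideanSpace ℝ (Fin n) => gg1 m (‖y‖^2) * (2 * y i) :=
        funext fun y => hφ1 y i
      have h1 : HasFDerivAt (fun y : EuclideanSpace ℝ (Fin n) => gg1 m (‖y‖^2))
          (gg2 m (‖x‖^2) • (2 • innerSL ℝ x)) x :=
        by have h0 := (hasDerivAt_gg1 hm (hpos x)).comp_hasFDerivAt x (hu x); exact h0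
      have h2 : HasFDerivAt (fun y : EuclideanSpace ℝ (Fin n) => 2 * y i)
          ((2:ℝ) • (EuclideanSpace.proj i : EuclideanSpace ℝ (Fin n) →L[ℝ] ℝ)) x :=
        ((EuclideanSpace.proj i : EuclideanSpace ℝ (Fin n) →L[ℝ] ℝ).hasFDerivAt).const_mul (2:ℝ)
      have h3 := h1.mul h2
      rw [heq, HasFDerivAt.fderiv (f := fun y : EuclideanSpace ℝ (Fin n) => gg1 m (‖y‖^2) * (2 * y i)) h3]
      simp [EuclideanSpace.inner_single_right, real_inner_comm, EuclideanSpace.single_apply]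
      ring
    rw [laplacian]
    rw [Finset.sum_congr rfl (fun i _ => hterm i)]
    rw [Finset.sum_add_distrib, Finset.sum_const, Finset.card_univ, Fintype.card_fin]
    have hns : ∑ i : Fin n, 4 * (x i * x i) * gg2 m (‖x‖^2) = 4 * ‖x‖^2 * gg2 m (‖x‖^2) := by
      rw [← Finset.sum_mul, ← Finset.mul_sum]
      congr 2
      rw [← real_inner_self_eq_norm_sq]
      simp [PiLp.inner_apply, RCLike.inner_apply]
      rw [EuclideanSpace.norm_eq, Real.sq_sqrt (by positivity)]; simp [sq]
    rw [hns]
    push_cast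
    ring
  have hform : ∀ x : EuclideanSpace ℝ (Fin n),
      laplacian φ x = -(3 * ((n : ℝ) - 2) ^ 2) * (‖x‖ ^ 2) ^ (n - 3)
        * (1 + (‖x‖ ^ 2) ^ (n - 2)) ^ (-(5 : ℝ) / 2) := by
    intro x
    rw [hlap x]
    have := gg_key (m := m) hm (t := ‖x‖^2) (by positivity)
    have hcast : ((m:ℝ) + 2) = (n:ℝ) := by
      rw [hmdef]; push_cast [Nat.cast_sub (by omega : 2 ≤ n)]; ring
    have hcast2 : ((m:ℝ)) = (n:ℝ) - 2 := by
      rw [hmdef]; push_cast [Nat.cast_sub (by omega : 2 ≤ n)]; ring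
    have hidx : m - 1 = n - 3 := by omega
    rw [hcast, hcast2, hidx] at this
    exact this
  refine ⟨hsmooth, hform, fun x => ?_⟩
  rw [hform x]
  have h1 : (0:ℝ) ≤ (‖x‖ ^ 2) ^ (n - 3) := by positivity
  have h2 : (0:ℝ) ≤ (1 + (‖x‖ ^ 2) ^ (n - 2)) ^ (-(5 : ℝ) / 2) := by positivity
  have h3 : -(3 * ((n : ℝ) - 2) ^ 2) ≤ 0 := by nlinarith [sq_nonneg ((n:ℝ) - 2)]
  nlinarith [mul_nonneg h1 h2]
end

section
/- Let n ≥ 2 be an integer, let c ≥ 1, β > 0, and s > 0. Let μ be a Borel measure on ℝⁿ and v : ℝⁿ → ℝ a measurable function such that μ({x : |x| ≤ r}) ≤ c·r^{n−1} for every r ≥ s and ∫_{{x : |x| ≥ ρ}} |x|^{−1−n}·v(x)² dμ(x) ≤ c·ρ^{−β} for every ρ ≥ s. Then there is a constant C > 0, depending only on n, c, and β, such that ∫_{{x : |x| ≥ s}} |x|^{−n}·|v(x)| dμ(x) ≤ C·s^{−β/2}. -/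
open MeasureTheory Set

private lemma amgm' (X Y t : ℝ) (ht : 0 < t) : X * Y ≤ t / 2 * X ^ 2 + 1 / (2 * t) * Y ^ 2 := by
  have h2t : (0:ℝ) < 2 * t := by linarith
  rw [← mul_le_mul_iff_right₀ h2t]
  have he : 2 * t * (t / 2 * X ^ 2 + 1 / (2 * t) * Y ^ 2) = t * t * X ^ 2 + Y ^ 2 := by
    field_simp
  rw [he]
  nlinarith [sq_nonneg (t * X - Y)]

private lemma pointwise_bound (a w t m : ℝ) (ha : 0 < a) (ht : 0 < t) :
    a ^ (-(m + 1)) * |w| ≤ t / 2 * a ^ (-m) + 1 / (2 * t) * (a ^ (-m - 2) * w ^ 2) := by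
  set X := a ^ (-m / 2) with hXdef
  set Y := a ^ ((-m - 2) / 2) * |w| with hYdef
  have hXY : X * Y = a ^ (-(m + 1)) * |w| := by
    rw [hXdef, hYdef, ← mul_assoc, ← Real.rpow_add ha]
    ring_nf
  have hX2 : X ^ 2 = a ^ (-m) := by
    rw [hXdef, ← Real.rpow_natCast (a ^ (-m / 2)) 2, ← Real.rpow_mul ha.le]
    norm_num
  have hY2 : Y ^ 2 = a ^ (-m - 2) * w ^ 2 := by
    rw [hYdef, mul_pow, ← Real.rpow_natCast (a ^ ((-m - 2) / 2)) 2, ← Real.rpow_mul ha.le,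
      sq_abs]
    norm_num
  calc a ^ (-(m + 1)) * |w| = X * Y := hXY.symm
    _ ≤ t / 2 * X ^ 2 + 1 / (2 * t) * Y ^ 2 := amgm' X Y t ht
    _ = t / 2 * a ^ (-m) + 1 / (2 * t) * (a ^ (-m - 2) * w ^ 2) := by rw [hX2, hY2]

/-- **Dyadic Cauchy–Schwarz estimate** (measure-theoretic form of Lemma 2.9). If a Borel measure
`μ` on `ℝⁿ` has the growth `μ {|x| ≤ r} ≤ c r^(n-1)` for `r ≥ s` and the weighted square-decay
`∫_{|x| ≥ ρ} |x|^(-1-n) v² dμ ≤ c ρ^(-β)` for `ρ ≥ s`, then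
`∫_{|x| ≥ s} |x|^(-n) |v| dμ ≤ C s^(-β/2)` with `C` depending only on `n`, `c`, `β`. -/
theorem dyadic_cauchy_schwarz (n : ℕ) (hn : 2 ≤ n) (c β : ℝ) (hc : 1 ≤ c) (hβ : 0 < β) :
    ∃ C > (0 : ℝ), ∀ s : ℝ, 0 < s →
      ∀ (μ : Measure (EuclideanSpace ℝ (Fin n))) (v : EuclideanSpace ℝ (Fin n) → ℝ),
        Measurable v →
        (∀ r : ℝ, s ≤ r →
          μ {x : EuclideanSpace ℝ (Fin n) | ‖x‖ ≤ r} ≤ ENNReal.ofReal (c * r ^ ((n : ℝ) - 1))) →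
        (∀ ρ : ℝ, s ≤ ρ →
          ∫⁻ x in {x : EuclideanSpace ℝ (Fin n) | ρ ≤ ‖x‖},
              ENNReal.ofReal (‖x‖ ^ (-1 - (n : ℝ)) * v x ^ 2) ∂μ
            ≤ ENNReal.ofReal (c * ρ ^ (-β))) →
        ∫⁻ x in {x : EuclideanSpace ℝ (Fin n) | s ≤ ‖x‖},
            ENNReal.ofReal (‖x‖ ^ (-(n : ℝ)) * |v x|) ∂μ
          ≤ ENNReal.ofReal (C * s ^ (-β / 2)) := by
  classical
  set r : ℝ := (2 : ℝ) ^ (-β / 2) with hrdef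
  have hr0 : 0 < r := Real.rpow_pos_of_pos two_pos _
  have hr1 : r < 1 := Real.rpow_lt_one_of_one_lt_of_neg one_lt_two (by linarith)
  set K : ℝ := c / 2 * ((2 : ℝ) ^ ((n : ℝ) - 1) + 1) with hKdef
  have h2pow : (0:ℝ) < (2 : ℝ) ^ ((n : ℝ) - 1) := Real.rpow_pos_of_pos two_pos _
  have hc0 : (0:ℝ) < c := by linarith
  have hK0 : 0 < K := by positivity
  refine ⟨K * (1 - r)⁻¹, mul_pos hK0 (inv_pos.2 (by linarith)), ?_⟩
  intro s hs μ v hv hμ hint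
  set A : ℕ → Set (EuclideanSpace ℝ (Fin n)) :=
    fun k => {x | 2 ^ k * s ≤ ‖x‖ ∧ ‖x‖ < 2 ^ (k + 1) * s} with hAdef
  -- the annuli cover the exterior region
  have hcover : {x : EuclideanSpace ℝ (Fin n) | s ≤ ‖x‖} ⊆ ⋃ k, A k := by
    intro x hx
    simp only [mem_setOf_eq] at hx
    have hex : ∃ k : ℕ, ‖x‖ < 2 ^ k * s := by
      obtain ⟨k, hk⟩ := pow_unbounded_of_one_lt (‖x‖ / s) (one_lt_two : (1:ℝ) < 2)
      exact ⟨k, by rwa [div_lt_iff₀ hs] at hk⟩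
    have hk0 : Nat.find hex ≠ 0 := by
      intro h
      have := Nat.find_spec hex
      rw [h] at this
      simp only [pow_zero, one_mul] at this
      linarith
    obtain ⟨m, hm⟩ := Nat.exists_eq_succ_of_ne_zero hk0
    have h1 : ‖x‖ < 2 ^ (m + 1) * s := by
      have := Nat.find_spec hex
      rwa [hm] at this
    have h2 : 2 ^ m * s ≤ ‖x‖ := by
      have := Nat.find_min hex (show m < Nat.find hex by omega)
      exact not_lt.1 this
    exact mem_iUnion.2 ⟨m, ⟨h2, h1⟩⟩
  have hAmeas : ∀ k, MeasurableSet (A k) := by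
    intro k
    have : A k = (fun x : EuclideanSpace ℝ (Fin n) => ‖x‖) ⁻¹' (Ico (2 ^ k * s) (2 ^ (k+1) * s)) := by
      ext x; simp [hAdef, Ico, and_comm]
    rw [this]
    exact measurable_norm measurableSet_Ico
  -- key per-annulus estimate
  have hann : ∀ k : ℕ, ∫⁻ x in A k, ENNReal.ofReal (‖x‖ ^ (-(n : ℝ)) * |v x|) ∂μ
      ≤ ENNReal.ofReal (K * s ^ (-β / 2)) * ENNReal.ofReal r ^ k := by
    intro k
    set ρ : ℝ := 2 ^ k * s with hρdef
    have hρ0 : 0 < ρ := by positivity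
    have h2k : (1:ℝ) ≤ 2 ^ k := one_le_pow₀ one_le_two
    have hsρ : s ≤ ρ := le_mul_of_one_le_left hs.le h2k
    set t : ℝ := ρ ^ (-β / 2) with htdef
    have ht0 : 0 < t := Real.rpow_pos_of_pos hρ0 _
    -- pointwise bound on the annulus
    have hpt : ∀ x ∈ A k, ENNReal.ofReal (‖x‖ ^ (-(n : ℝ)) * |v x|)
        ≤ ENNReal.ofReal (t / 2 * ‖x‖ ^ (-((n : ℝ) - 1)))
          + ENNReal.ofReal (1 / (2 * t) * (‖x‖ ^ (-1 - (n : ℝ)) * v x ^ 2)) := by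
      intro x hx
      have hx0 : 0 < ‖x‖ := lt_of_lt_of_le hρ0 hx.1
      have key := pointwise_bound ‖x‖ (v x) t ((n : ℝ) - 1) hx0 ht0
      have e1 : -(((n : ℝ) - 1) + 1) = -(n : ℝ) := by ring
      have e2 : -((n : ℝ) - 1) - 2 = -1 - (n : ℝ) := by ring
      rw [e1, e2] at key
      calc ENNReal.ofReal (‖x‖ ^ (-(n : ℝ)) * |v x|)
          ≤ ENNReal.ofReal (t / 2 * ‖x‖ ^ (-((n : ℝ) - 1))
              + 1 / (2 * t) * (‖x‖ ^ (-1 - (n : ℝ)) * v x ^ 2)) :=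
            ENNReal.ofReal_le_ofReal key
        _ ≤ _ := ENNReal.ofReal_add_le
    -- first term
    have hT1 : ∫⁻ x in A k, ENNReal.ofReal (t / 2 * ‖x‖ ^ (-((n : ℝ) - 1))) ∂μ
        ≤ ENNReal.ofReal (c / 2 * (2 : ℝ) ^ ((n : ℝ) - 1) * t) := by
      have hsub : A k ⊆ {x : EuclideanSpace ℝ (Fin n) | ‖x‖ ≤ 2 ^ (k + 1) * s} :=
        fun x hx => le_of_lt hx.2
      have hμA : μ (A k) ≤ ENNReal.ofReal (c * (2 ^ (k + 1) * s) ^ ((n : ℝ) - 1)) :=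
        le_trans (measure_mono hsub) (hμ _ (le_trans hsρ (by
          rw [hρdef]
          have : (2:ℝ) ^ k ≤ 2 ^ (k+1) := by
            apply pow_le_pow_right₀ one_le_two; omega
          nlinarith)))
      calc ∫⁻ x in A k, ENNReal.ofReal (t / 2 * ‖x‖ ^ (-((n : ℝ) - 1))) ∂μ
          ≤ ∫⁻ _ in A k, ENNReal.ofReal (t / 2 * ρ ^ (-((n : ℝ) - 1))) ∂μ := by
            refine setLIntegral_mono' (hAmeas k) ?_
            intro x hx
            apply ENNReal.ofReal_le_ofReal
            apply mul_le_mul_of_nonneg_left _ (by positivity)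
            refine Real.rpow_le_rpow_of_nonpos hρ0 hx.1 ?_
            have hn2 : (2:ℝ) ≤ n := by exact_mod_cast hn
            linarith
        _ = ENNReal.ofReal (t / 2 * ρ ^ (-((n : ℝ) - 1))) * μ (A k) := setLIntegral_const _ _
        _ ≤ ENNReal.ofReal (t / 2 * ρ ^ (-((n : ℝ) - 1)))
            * ENNReal.ofReal (c * (2 ^ (k + 1) * s) ^ ((n : ℝ) - 1)) := by gcongr
        _ = ENNReal.ofReal (t / 2 * ρ ^ (-((n : ℝ) - 1))
            * (c * (2 * ρ) ^ ((n : ℝ) - 1))) := by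
            rw [← ENNReal.ofReal_mul (by positivity)]
            congr 3
            rw [hρdef]; ring
        _ = ENNReal.ofReal (c / 2 * (2 : ℝ) ^ ((n : ℝ) - 1) * t) := by
            congr 1
            rw [Real.mul_rpow (by norm_num) hρ0.le]
            have hPQ : ρ ^ (-((n : ℝ) - 1)) * ρ ^ ((n : ℝ) - 1) = 1 := by
              rw [← Real.rpow_add hρ0]; norm_num
            linear_combination (c * t * (2:ℝ) ^ ((n : ℝ) - 1) / 2) * hPQ
    -- second term
    have hT2 : ∫⁻ x in A k, ENNReal.ofReal (1 / (2 * t) * (‖x‖ ^ (-1 - (n : ℝ)) * v x ^ 2)) ∂μ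
        ≤ ENNReal.ofReal (c / 2 * ρ ^ (-β / 2)) := by
      have harith : 1 / (2 * t) * (c * ρ ^ (-β)) = c / 2 * ρ ^ (-β / 2) := by
        have h1 : t = (ρ ^ (β / 2))⁻¹ := by
          rw [htdef, neg_div, Real.rpow_neg hρ0.le]
        have h2 : ρ ^ (β / 2) * ρ ^ (-β) = ρ ^ (-β / 2) := by
          have e : β / 2 + -β = -β / 2 := by ring
          rw [← Real.rpow_add hρ0, e]
        have hq : ρ ^ (β / 2) ≠ 0 := (Real.rpow_pos_of_pos hρ0 _).ne'
        rw [h1, ← h2]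
        field_simp
      calc ∫⁻ x in A k, ENNReal.ofReal (1 / (2 * t) * (‖x‖ ^ (-1 - (n : ℝ)) * v x ^ 2)) ∂μ
          = ∫⁻ x in A k, ENNReal.ofReal (1 / (2 * t))
              * ENNReal.ofReal (‖x‖ ^ (-1 - (n : ℝ)) * v x ^ 2) ∂μ := by
            congr 1; funext x
            exact ENNReal.ofReal_mul (by positivity)
        _ = ENNReal.ofReal (1 / (2 * t))
            * ∫⁻ x in A k, ENNReal.ofReal (‖x‖ ^ (-1 - (n : ℝ)) * v x ^ 2) ∂μ :=
            lintegral_const_mul' _ _ ENNReal.ofReal_ne_top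
        _ ≤ ENNReal.ofReal (1 / (2 * t)) * ENNReal.ofReal (c * ρ ^ (-β)) := by
            gcongr
            refine le_trans (lintegral_mono_set ?_) (hint ρ hsρ)
            exact fun x hx => hx.1
        _ = ENNReal.ofReal (1 / (2 * t) * (c * ρ ^ (-β))) :=
            (ENNReal.ofReal_mul (by positivity)).symm
        _ = ENNReal.ofReal (c / 2 * ρ ^ (-β / 2)) := by rw [harith]
    -- combine
    have hρpow : ρ ^ (-β / 2) = r ^ k * s ^ (-β / 2) := by
      rw [hρdef, Real.mul_rpow (by positivity) hs.le]
      congr 1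
      rw [← Real.rpow_natCast (2:ℝ) k, ← Real.rpow_mul (by norm_num : (0:ℝ) ≤ 2),
        mul_comm ((k:ℝ)) (-β / 2), Real.rpow_mul (by norm_num : (0:ℝ) ≤ 2),
        Real.rpow_natCast]
    calc ∫⁻ x in A k, ENNReal.ofReal (‖x‖ ^ (-(n : ℝ)) * |v x|) ∂μ
        ≤ ∫⁻ x in A k, (ENNReal.ofReal (t / 2 * ‖x‖ ^ (-((n : ℝ) - 1)))
            + ENNReal.ofReal (1 / (2 * t) * (‖x‖ ^ (-1 - (n : ℝ)) * v x ^ 2))) ∂μ :=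
          setLIntegral_mono' (hAmeas k) hpt
      _ = (∫⁻ x in A k, ENNReal.ofReal (t / 2 * ‖x‖ ^ (-((n : ℝ) - 1))) ∂μ)
          + ∫⁻ x in A k, ENNReal.ofReal (1 / (2 * t) * (‖x‖ ^ (-1 - (n : ℝ)) * v x ^ 2)) ∂μ :=
          lintegral_add_left (by fun_prop) _
      _ ≤ ENNReal.ofReal (c / 2 * (2 : ℝ) ^ ((n : ℝ) - 1) * t)
          + ENNReal.ofReal (c / 2 * ρ ^ (-β / 2)) := add_le_add hT1 hT2
      _ = ENNReal.ofReal (K * ρ ^ (-β / 2)) := by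
          rw [← ENNReal.ofReal_add (by positivity) (by positivity)]
          congr 1
          rw [hKdef, htdef]; ring
      _ = ENNReal.ofReal (K * s ^ (-β / 2)) * ENNReal.ofReal r ^ k := by
          rw [hρpow, ← ENNReal.ofReal_pow hr0.le, ← ENNReal.ofReal_mul (by positivity)]
          congr 1; ring
  -- sum the geometric series
  calc ∫⁻ x in {x : EuclideanSpace ℝ (Fin n) | s ≤ ‖x‖},
        ENNReal.ofReal (‖x‖ ^ (-(n : ℝ)) * |v x|) ∂μ
      ≤ ∫⁻ x in ⋃ k, A k, ENNReal.ofReal (‖x‖ ^ (-(n : ℝ)) * |v x|) ∂μ :=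
        lintegral_mono_set hcover
    _ ≤ ∑' k, ∫⁻ x in A k, ENNReal.ofReal (‖x‖ ^ (-(n : ℝ)) * |v x|) ∂μ :=
        lintegral_iUnion_le _ _
    _ ≤ ∑' k, ENNReal.ofReal (K * s ^ (-β / 2)) * ENNReal.ofReal r ^ k :=
        ENNReal.tsum_le_tsum hann
    _ = ENNReal.ofReal (K * s ^ (-β / 2)) * ∑' k, ENNReal.ofReal r ^ k :=
        ENNReal.tsum_mul_left
    _ = ENNReal.ofReal (K * s ^ (-β / 2)) * (1 - ENNReal.ofReal r)⁻¹ := by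
        rw [ENNReal.tsum_geometric]
    _ = ENNReal.ofReal (K * (1 - r)⁻¹ * s ^ (-β / 2)) := by
        rw [← ENNReal.ofReal_one, ← ENNReal.ofReal_sub _ hr0.le,
          ← ENNReal.ofReal_inv_of_pos (by linarith), ← ENNReal.ofReal_mul (by positivity)]
        congr 1; ring
end

section
/- Let n ≥ 4 be an integer, let τ > 1 and c ≥ 1. Then there exist t₀ > 0 and c₀ > 0, depending only on n, τ, and c, with the following property. For every r > t₀, every z ∈ ℝ, and every continuously differentiable f : (0, r] → ℝ with f(r) = z and f′(t) ≤ 0 for all t ∈ (0, r), such that the function ψ(t) = t^{n−2}·f′(t)/√(1 + f′(t)²) is differentiable on (0, r) with ψ′(t) ≥ −c·t^{n−2}·(1 + (t² + f(t)²)^{(τ+1)/2})^{−1} for all t ∈ (0, r) and ψ(t) → 0 as t → 0⁺, one has z ≤ f(t) ≤ c₀ + z for every t ∈ (t₀, r]. -/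
open MeasureTheory Set Real Filter

private lemma mono_aux {g g' : ℝ → ℝ} {s t : ℝ} (hst : s ≤ t)
    (hg : ContinuousOn g (Set.Icc s t))
    (hd : ∀ x ∈ Set.Ioo s t, HasDerivAt g (g' x) x)
    (h0 : ∀ x ∈ Set.Ioo s t, 0 ≤ g' x) : g s ≤ g t := by
  have := monotoneOn_of_hasDerivWithinAt_nonneg (convex_Icc s t) hg
    (fun x hx => by
      rw [interior_Icc] at hx ⊢
      exact (hd x hx).hasDerivWithinAt)
    (fun x hx => h0 x (by rwa [interior_Icc] at hx))
  exact this (Set.left_mem_Icc.2 hst) (Set.right_mem_Icc.2 hst) hst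

set_option maxHeartbeats 2000000 in
/-- **Second height bound** (ODE content of Lemma 7.3). For `n ≥ 4`, `τ > 1`, `c ≥ 1` there are
`t₀, c₀ > 0` depending only on `n, τ, c` such that every continuously differentiable radial
profile `f : (0, r] → ℝ` with `f(r) = z`, `f' ≤ 0`, whose flux
`ψ(t) = t^(n-2) f'(t)/√(1+f'(t)²)` satisfies
`ψ'(t) ≥ -c t^(n-2) (1 + (t² + f(t)²)^((τ+1)/2))⁻¹` and `ψ(t) → 0` as `t → 0⁺`, obeys
`z ≤ f(t) ≤ c₀ + z` for every `t ∈ (t₀, r]`. -/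
theorem second_height_bound (n : ℕ) (hn : 4 ≤ n) (τ c : ℝ) (hτ : 1 < τ) (hc : 1 ≤ c) :
    ∃ t₀ > (0 : ℝ), ∃ c₀ > (0 : ℝ), ∀ r : ℝ, t₀ < r → ∀ z : ℝ, ∀ f f' ψ' : ℝ → ℝ,
      (∀ t ∈ Set.Ioo (0 : ℝ) r, HasDerivAt f (f' t) t) →
      ContinuousOn f (Set.Ioc 0 r) →
      ContinuousOn f' (Set.Ioc 0 r) →
      f r = z →
      (∀ t ∈ Set.Ioo (0 : ℝ) r, f' t ≤ 0) →
      (∀ t ∈ Set.Ioo (0 : ℝ) r,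
        HasDerivAt (fun u => u ^ ((n : ℝ) - 2) * f' u / Real.sqrt (1 + f' u ^ 2)) (ψ' t) t) →
      (∀ t ∈ Set.Ioo (0 : ℝ) r,
        -(c * t ^ ((n : ℝ) - 2) * (1 + (t ^ 2 + f t ^ 2) ^ ((τ + 1) / 2))⁻¹) ≤ ψ' t) →
      Filter.Tendsto (fun u => u ^ ((n : ℝ) - 2) * f' u / Real.sqrt (1 + f' u ^ 2))
        (nhdsWithin 0 (Set.Ioi 0)) (nhds 0) →
      ∀ t ∈ Set.Ioc t₀ r, z ≤ f t ∧ f t ≤ c₀ + z := by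
  have hN : (4 : ℝ) ≤ (n : ℝ) := by exact_mod_cast hn
  set N : ℝ := (n : ℝ) with hNdef
  set μ : ℝ := min τ (N - 5 / 2) with hμdef
  have hμ1 : 1 < μ := lt_min hτ (by linarith)
  have hμτ : μ ≤ τ := min_le_left _ _
  have hμN : μ ≤ N - 5 / 2 := min_le_right _ _
  have hμpos : 0 < μ := by linarith
  set a : ℝ := N - 2 - μ with hadef
  have hapos : (0 : ℝ) < a := by simp only [hadef]; linarith
  have ha1 : a - 1 = N - 3 - μ := by ring
  have hcpos : (0 : ℝ) < c := by linarith
  set K : ℝ := c / a with hKdef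
  have hK : 0 < K := div_pos hcpos hapos
  set t₀ : ℝ := (2 * K) ^ (μ⁻¹ : ℝ) with ht₀def
  have ht₀ : 0 < t₀ := Real.rpow_pos_of_pos (by linarith) _
  have hkey : K * t₀ ^ (-μ) = 1 / 2 := by
    have h1 : t₀ ^ (-μ) = (2 * K) ^ (μ⁻¹ * -μ) := by
      rw [ht₀def, ← Real.rpow_mul (by linarith : (0:ℝ) ≤ 2 * K)]
    have h2 : μ⁻¹ * -μ = (-1 : ℝ) := by
      field_simp
    rw [h1, h2, Real.rpow_neg_one]
    field_simp
  set c₀ : ℝ := 2 * K * t₀ ^ (1 - μ) / (μ - 1) with hc₀def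
  have hc₀ : 0 < c₀ := by
    apply div_pos _ (by linarith)
    have := Real.rpow_pos_of_pos ht₀ (1 - μ)
    positivity
  refine ⟨t₀, ht₀, c₀, hc₀, fun r hr z f f' ψ' hderiv hfc hf'c hfr hf'le hψd hψ'ge hψ0
    t ht => ?_⟩
  set ψ : ℝ → ℝ := fun u => u ^ (N - 2) * f' u / Real.sqrt (1 + f' u ^ 2) with hψdef
  have hrpos : 0 < r := lt_trans ht₀ hr
  -- Step A : pointwise lower bound on ψ
  have stepA : ∀ s ∈ Set.Ioo (0 : ℝ) r, -(K * s ^ a) ≤ ψ s := by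
    intro s0 hs0
    set h : ℝ → ℝ := fun u => ψ u + K * u ^ a with hhdef
    -- derivative of h is nonnegative on Ioo 0 r
    have hd : ∀ x ∈ Set.Ioo (0 : ℝ) r, HasDerivAt h (ψ' x + c * x ^ (a - 1)) x := by
      intro x hx
      have h1 : HasDerivAt (fun u : ℝ => u ^ a) (a * x ^ (a - 1)) x :=
        Real.hasDerivAt_rpow_const (Or.inl (ne_of_gt hx.1))
      have h2 : HasDerivAt (fun u : ℝ => K * u ^ a) (K * (a * x ^ (a - 1))) x :=
        h1.const_mul K
      have h3 := (hψd x hx).add h2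
      have : ψ' x + K * (a * x ^ (a - 1)) = ψ' x + c * x ^ (a - 1) := by
        rw [hKdef]; field_simp
      rw [this] at h3
      exact h3
    have h0 : ∀ x ∈ Set.Ioo (0 : ℝ) r, 0 ≤ ψ' x + c * x ^ (a - 1) := by
      intro x hx
      have hx0 : 0 < x := hx.1
      have hle := hψ'ge x hx
      -- bound:  x ^ (N-2) * (1 + X)⁻¹ ≤ x ^ (a-1)
      have hX : x ^ (μ + 1) ≤ 1 + (x ^ 2 + f x ^ 2) ^ ((τ + 1) / 2) := by
        have h1 : x ^ (τ + 1) ≤ (x ^ 2 + f x ^ 2) ^ ((τ + 1) / 2) := by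
          have h2 : (x ^ 2 : ℝ) ^ ((τ + 1) / 2) ≤ (x ^ 2 + f x ^ 2) ^ ((τ + 1) / 2) := by
            apply Real.rpow_le_rpow (by positivity) (by nlinarith [sq_nonneg (f x)])
              (by linarith)
          have h3 : (x ^ 2 : ℝ) ^ ((τ + 1) / 2) = x ^ (τ + 1) := by
            rw [← Real.rpow_two, ← Real.rpow_mul (le_of_lt hx0)]
            congr 1; ring
          linarith [h3 ▸ h2]
        rcases le_total x 1 with hx1 | hx1
        · have : x ^ (μ + 1) ≤ 1 :=
            Real.rpow_le_one (le_of_lt hx0) hx1 (by linarith)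
          have hXnn : (0:ℝ) ≤ (x ^ 2 + f x ^ 2) ^ ((τ + 1) / 2) := by positivity
          linarith
        · have h4 : x ^ (μ + 1) ≤ x ^ (τ + 1) :=
            Real.rpow_le_rpow_of_exponent_le hx1 (by linarith)
          linarith
      have hb : x ^ (N - 2) * (1 + (x ^ 2 + f x ^ 2) ^ ((τ + 1) / 2))⁻¹ ≤ x ^ (a - 1) := by
        have hden : (0 : ℝ) < 1 + (x ^ 2 + f x ^ 2) ^ ((τ + 1) / 2) := by positivity
        rw [mul_inv_le_iff₀ hden, mul_comm (x ^ (a - 1))]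
        calc x ^ (N - 2) = x ^ (a - 1) * x ^ (μ + 1) := by
              rw [← Real.rpow_add hx0]; congr 1; rw [hadef]; ring
          _ ≤ x ^ (a - 1) * (1 + (x ^ 2 + f x ^ 2) ^ ((τ + 1) / 2)) := by
              apply mul_le_mul_of_nonneg_left hX (le_of_lt (Real.rpow_pos_of_pos hx0 _))
          _ = (1 + (x ^ 2 + f x ^ 2) ^ ((τ + 1) / 2)) * x ^ (a - 1) := mul_comm _ _
      have : -(c * x ^ (a - 1)) ≤ ψ' x := by
        refine le_trans ?_ hle
        have := mul_le_mul_of_nonneg_left hb (le_of_lt hcpos)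
        rw [← mul_assoc] at this
        linarith
      linarith
    -- h is monotone hence ≥ its limit 0 at 0⁺
    have hcont : ∀ x ∈ Set.Ioo (0 : ℝ) r, ContinuousAt h x := by
      intro x hx
      exact ((hψd x hx).continuousAt.add
        ((Real.continuousAt_rpow_const x a (Or.inl (ne_of_gt hx.1))).const_mul K))
    have hmono : ∀ s ∈ Set.Ioo (0 : ℝ) s0, h s ≤ h s0 := by
      intro s hs
      have hsub : Set.Icc s s0 ⊆ Set.Ioo 0 r := fun x hx =>
        ⟨lt_of_lt_of_le hs.1 hx.1, lt_of_le_of_lt hx.2 hs0.2⟩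
      refine mono_aux (le_of_lt hs.2) (fun x hx => (hcont x (hsub hx)).continuousWithinAt)
        (fun x hx => hd x (hsub (Set.Ioo_subset_Icc_self hx)))
        (fun x hx => h0 x (hsub (Set.Ioo_subset_Icc_self hx)))
    have hlim : Filter.Tendsto h (nhdsWithin 0 (Set.Ioi 0)) (nhds 0) := by
      have hca : ContinuousAt (fun u : ℝ => u ^ a) 0 :=
        Real.continuousAt_rpow_const 0 a (Or.inr hapos.le)
      have h1 : Filter.Tendsto (fun u : ℝ => u ^ a) (nhdsWithin 0 (Set.Ioi 0)) (nhds 0) := by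
        have := hca.tendsto
        rw [Real.zero_rpow (ne_of_gt hapos)] at this
        exact this.mono_left nhdsWithin_le_nhds
      have h2 := (h1.const_mul K)
      have h3 := hψ0.add h2
      simpa using h3
    have h4 : (0 : ℝ) ≤ h s0 := by
      refine le_of_tendsto hlim ?_
      filter_upwards [Ioo_mem_nhdsGT_of_mem (Set.left_mem_Ico.2 hs0.1)] with s hs
      exact hmono s hs
    have : h s0 = ψ s0 + K * s0 ^ a := rfl
    linarith
  -- Step B : bound on f'
  have stepB : ∀ s ∈ Set.Ioo t₀ r, -(2 * (K * s ^ (-μ))) ≤ f' s := by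
    intro s hs
    have hspos : 0 < s := lt_trans ht₀ hs.1
    have hsr : s ∈ Set.Ioo (0 : ℝ) r := ⟨hspos, hs.2⟩
    set m : ℝ := K * s ^ (-μ) with hmdef
    have hmpos : 0 < m := mul_pos hK (Real.rpow_pos_of_pos hspos _)
    have hm2 : m ≤ 1 / 2 := by
      have : s ^ (-μ) ≤ t₀ ^ (-μ) :=
        Real.rpow_le_rpow_of_nonpos ht₀ (le_of_lt hs.1) (by linarith)
      calc m ≤ K * t₀ ^ (-μ) := mul_le_mul_of_nonneg_left this (le_of_lt hK)
        _ = 1 / 2 := hkey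
    set q : ℝ := f' s with hqdef
    have hq0 : q ≤ 0 := hf'le s hsr
    set S : ℝ := Real.sqrt (1 + q ^ 2) with hSdef
    have hSpos : 0 < S := Real.sqrt_pos.2 (by positivity)
    have hS2 : S ^ 2 = 1 + q ^ 2 := Real.sq_sqrt (by positivity)
    have hA := stepA s hsr
    have hψs : ψ s = s ^ (N - 2) * q / S := rfl
    have hpow : 0 < s ^ (N - 2) := Real.rpow_pos_of_pos hspos _
    -- from  -(K s^a) ≤ s^(N-2) q / S  derive  -(m S) ≤ q
    have h5 : -(K * s ^ a) * S ≤ s ^ (N - 2) * q := by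
      rw [hψs] at hA
      calc -(K * s ^ a) * S ≤ (s ^ (N - 2) * q / S) * S :=
            mul_le_mul_of_nonneg_right hA (le_of_lt hSpos)
        _ = s ^ (N - 2) * q := by field_simp
    have h6 : -(m * S) ≤ q := by
      have h7 : s ^ a = s ^ (-μ) * s ^ (N - 2) := by
        rw [← Real.rpow_add hspos]; congr 1; rw [hadef]; ring
      have h8 : -(m * S) * s ^ (N - 2) ≤ q * s ^ (N - 2) := by
        have : -(K * s ^ a) * S = -(m * S) * s ^ (N - 2) := by rw [h7, hmdef]; ring
        rw [this] at h5; linarith [h5]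
      exact le_of_mul_le_mul_right (by linarith) hpow
    -- deduce -(2m) ≤ q
    show -(2 * m) ≤ q
    clear_value m S q
    clear hA hψs h5
    have h10 : -q ≤ m * S := by linarith
    have h11 : q ^ 2 ≤ m ^ 2 * (1 + q ^ 2) := by
      calc q ^ 2 = (-q) * (-q) := by ring
        _ ≤ (m * S) * (m * S) := mul_self_le_mul_self (by linarith) h10
        _ = m ^ 2 * S ^ 2 := by ring
        _ = m ^ 2 * (1 + q ^ 2) := by rw [hS2]
    have h13 : m ^ 2 ≤ 1 / 4 := by nlinarith [hmpos.le, hm2]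
    have h14 : q ^ 2 ≤ 4 * m ^ 2 := by
      nlinarith [mul_le_mul_of_nonneg_right h13 (sq_nonneg q)]
    by_contra hcon
    push_neg at hcon
    have h15 : (2 * m) * (2 * m) < (-q) * (-q) :=
      mul_self_lt_mul_self (by positivity) (by linarith)
    nlinarith [h15]
  -- Step C : lower bound  z ≤ f t
  have htpos : 0 < t := lt_trans ht₀ ht.1
  have hsubIcc : Set.Icc t r ⊆ Set.Ioc (0 : ℝ) r := fun x hx =>
    ⟨lt_of_lt_of_le htpos hx.1, hx.2⟩
  have hsubIoo : Set.Ioo t r ⊆ Set.Ioo (0 : ℝ) r := fun x hx =>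
    ⟨lt_trans htpos hx.1, hx.2⟩
  have lower : z ≤ f t := by
    have h := mono_aux (g := fun u => -f u) (g' := fun u => -f' u) ht.2
      ((hfc.mono hsubIcc).neg)
      (fun x hx => (hderiv x (hsubIoo hx)).neg)
      (fun x hx => by
        have h' := hf'le x (hsubIoo hx)
        show (0:ℝ) ≤ -f' x
        linarith)
    have h2 : -f t ≤ -f r := h
    rw [hfr] at h2
    linarith
  -- Step D : upper bound
  have upper : f t ≤ c₀ + z := by
    set G : ℝ → ℝ := fun u => f u - 2 * K / (μ - 1) * u ^ (1 - μ) with hGdef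
    have hG : G t ≤ G r := by
      refine mono_aux (g' := fun u => f' u + 2 * K * u ^ (-μ)) ht.2 ?_ ?_ ?_
      · apply (hfc.mono hsubIcc).sub
        intro x hx
        exact (continuousAt_const.mul (Real.continuousAt_rpow_const x (1 - μ)
          (Or.inl (ne_of_gt (lt_of_lt_of_le htpos hx.1))))).continuousWithinAt
      · intro x hx
        have hxpos : 0 < x := lt_trans htpos hx.1
        have h1 : HasDerivAt (fun u : ℝ => u ^ (1 - μ)) ((1 - μ) * x ^ (1 - μ - 1)) x :=
          Real.hasDerivAt_rpow_const (Or.inl (ne_of_gt hxpos))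
        have h2 := (hderiv x (hsubIoo hx)).sub (h1.const_mul (2 * K / (μ - 1)))
        have h3 : f' x - 2 * K / (μ - 1) * ((1 - μ) * x ^ (1 - μ - 1)) =
            f' x + 2 * K * x ^ (-μ) := by
          have : (1 : ℝ) - μ - 1 = -μ := by ring
          rw [this]
          have hμne : μ - 1 ≠ 0 := by intro hcon; rw [sub_eq_zero] at hcon; linarith [hμ1]
          field_simp
          ring
        rw [h3] at h2
        exact h2
      · intro x hx
        have hB := stepB x ⟨lt_trans ht.1 hx.1, hx.2⟩
        show (0:ℝ) ≤ f' x + 2 * K * x ^ (-μ)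
        linarith
    have hGt : G t = f t - 2 * K / (μ - 1) * t ^ (1 - μ) := rfl
    have hGr : G r = z - 2 * K / (μ - 1) * r ^ (1 - μ) := by rw [hGdef]; simp [hfr]
    have hrp : 0 < r ^ (1 - μ) := Real.rpow_pos_of_pos hrpos _
    have htt : t ^ (1 - μ) ≤ t₀ ^ (1 - μ) :=
      Real.rpow_le_rpow_of_nonpos ht₀ (le_of_lt ht.1) (by linarith)
    have hcoef : (0 : ℝ) ≤ 2 * K / (μ - 1) :=
      le_of_lt (div_pos (by linarith) (by linarith))
    have : f t ≤ z + 2 * K / (μ - 1) * t ^ (1 - μ) := by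
      rw [hGt, hGr] at hG
      nlinarith [mul_le_mul_of_nonneg_left (le_of_lt hrp) hcoef]
    calc f t ≤ z + 2 * K / (μ - 1) * t ^ (1 - μ) := this
      _ ≤ z + 2 * K / (μ - 1) * t₀ ^ (1 - μ) :=
          by nlinarith [mul_le_mul_of_nonneg_left htt hcoef]
      _ = c₀ + z := by rw [hc₀def]; ring
  exact ⟨lower, upper⟩
end
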